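/- arXiv:1905.11899 — 6 statements merged into one kernel-verified Lean document; each statement's English description precedes it below -/
import Mathlib

section
/- Let N ≥ 1 and let −1 = ξ₀ < ξ₁ < ⋯ < ξ_N = 1 and ρ₀, …, ρ_N be a Gauss–Lobatto family on [−1,1], i.e. for every real polynomial φ of degree at most 2N−1, ∫_{−1}^{1} φ(ζ) dζ = Σ_{i=0}^{N} φ(ξ_i) ρ_i. Then for every real polynomial φ_N of degree at most N, ∫_{−1}^{1} φ_N(ζ)² dζ ≤ Σ_{i=0}^{N} φ_N(ξ_i)² ρ_i ≤ 3 ∫_{−1}^{1} φ_N(ζ)² dζ. -/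
open Polynomial MeasureTheory intervalIntegral

noncomputable def II (p : ℝ[X]) : ℝ := ∫ x in (-1:ℝ)..1, p.eval x

lemma poly_intInt (p : ℝ[X]) (a b : ℝ) :
    IntervalIntegrable (fun x => p.eval x) volume a b :=
  p.continuous.intervalIntegrable a b

lemma II_add (p q : ℝ[X]) : II (p + q) = II p + II q := by
  unfold II
  simp only [eval_add]
  exact intervalIntegral.integral_add (poly_intInt p _ _) (poly_intInt q _ _)

lemma II_C_mul (c : ℝ) (p : ℝ[X]) : II (C c * p) = c * II p := by
  unfold II
  simp only [eval_mul, eval_C]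
  exact intervalIntegral.integral_const_mul c _

lemma II_neg (p : ℝ[X]) : II (-p) = - II p := by
  have := II_C_mul (-1) p
  simpa using this

lemma II_sub (p q : ℝ[X]) : II (p - q) = II p - II q := by
  rw [sub_eq_add_neg, II_add, II_neg]; ring

lemma II_smul (n : ℕ) (p : ℝ[X]) : II (n • p) = n * II p := by
  have h : (n : ℕ) • p = C (n : ℝ) * p := by
    rw [← Nat.cast_smul_eq_nsmul ℝ, ← smul_eq_C_mul]
  rw [h, II_C_mul]

lemma II_one : II 1 = 2 := by
  unfold II; simp; norm_num

lemma II_nonneg (p : ℝ[X]) (h : ∀ x ∈ Set.Icc (-1:ℝ) 1, 0 ≤ p.eval x) : 0 ≤ II p := by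
  unfold II
  apply intervalIntegral.integral_nonneg (by norm_num)
  exact h

lemma II_derivative (p : ℝ[X]) : II (derivative p) = p.eval 1 - p.eval (-1) := by
  unfold II
  have : ∀ x ∈ Set.uIcc (-1:ℝ) 1, HasDerivAt (fun x => p.eval x) ((derivative p).eval x) x :=
    fun x _ => p.hasDerivAt x
  exact intervalIntegral.integral_eq_sub_of_hasDerivAt this (poly_intInt _ _ _)

lemma II_parts (p q : ℝ[X]) : II (derivative p * q) =
    p.eval 1 * q.eval 1 - p.eval (-1) * q.eval (-1) - II (p * derivative q) := by
  have h := II_derivative (p * q)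
  rw [derivative_mul, II_add] at h
  simp only [eval_mul] at h
  linarith

lemma II_zero : II 0 = 0 := by
  unfold II
  simp

set_option maxHeartbeats 1000000

-- key: nonneg polynomial on [-1,1] with zero integral is zero
lemma eq_zero_of_II_eq_zero (p : ℝ[X]) (hnn : ∀ x ∈ Set.Ioc (-1:ℝ) 1, 0 ≤ p.eval x)
    (hz : II p = 0) : p = 0 := by
  by_contra hp
  unfold II at hz
  rw [intervalIntegral.integral_of_le (by norm_num)] at hz
  have hint : IntegrableOn (fun x => p.eval x) (Set.Ioc (-1:ℝ) 1) volume :=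
    p.continuous.integrableOn_Ioc
  have hae : ∀ᵐ x ∂(volume.restrict (Set.Ioc (-1:ℝ) 1)), 0 ≤ p.eval x := by
    rw [ae_restrict_iff' measurableSet_Ioc]
    exact Filter.Eventually.of_forall hnn
  have h0 : (fun x => p.eval x) =ᵐ[volume.restrict (Set.Ioc (-1:ℝ) 1)] 0 :=
    (MeasureTheory.integral_eq_zero_iff_of_nonneg_ae (μ := volume.restrict (Set.Ioc (-1:ℝ) 1)) hae hint).mp hz
  -- the set where p ≠ 0 inside Ioc is null
  have hnull : volume ({x | p.eval x ≠ 0} ∩ Set.Ioc (-1:ℝ) 1) = 0 := by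
    have := ae_iff.mp h0
    rwa [Measure.restrict_apply₀] at this
    · exact (measurableSet_eq_fun (p.continuous.measurable) measurable_const).compl.nullMeasurableSet
  -- but roots are finite
  have hroots : ({x : ℝ | p.eval x = 0}).Finite := Polynomial.finite_setOf_isRoot hp
  have hsub : Set.Ioc (-1:ℝ) 1 ⊆ ({x | p.eval x ≠ 0} ∩ Set.Ioc (-1:ℝ) 1) ∪ {x : ℝ | p.eval x = 0} := by
    intro x hx
    by_cases h : p.eval x = 0
    · exact Or.inr h
    · exact Or.inl ⟨h, hx⟩
  have : volume (Set.Ioc (-1:ℝ) 1) ≤ 0 := by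
    calc volume (Set.Ioc (-1:ℝ) 1) ≤ volume (({x | p.eval x ≠ 0} ∩ Set.Ioc (-1:ℝ) 1) ∪ {x : ℝ | p.eval x = 0}) := measure_mono hsub
    _ ≤ volume ({x | p.eval x ≠ 0} ∩ Set.Ioc (-1:ℝ) 1) + volume {x : ℝ | p.eval x = 0} := measure_union_le _ _
    _ = 0 := by rw [hnull, hroots.measure_zero]; simp
  simp [Real.volume_Ioc] at this
  norm_num at this

lemma II_nat_mul (k : ℕ) (p : ℝ[X]) : II ((k : ℝ[X]) * p) = k * II p := by
  rw [← map_natCast (C : ℝ →+* ℝ[X]) k, II_C_mul]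

noncomputable def W (n : ℕ) : ℝ[X] := (X ^ 2 - 1) ^ n

lemma W_eq (n : ℕ) : W n = (X - C 1) ^ n * (X - C (-1)) ^ n := by
  unfold W
  rw [← mul_pow]
  congr 1
  simp [C_1]
  ring

lemma W_monic (n : ℕ) : (W n).Monic := by
  unfold W
  have h : (X ^ 2 - 1 : ℝ[X]) = X ^ 2 - C 1 := by simp
  rw [h]
  exact (monic_X_pow_sub_C (1:ℝ) (by norm_num)).pow n

lemma W_natDegree (n : ℕ) : (W n).natDegree = 2 * n := by
  unfold W
  have h : (X ^ 2 - 1 : ℝ[X]) = X ^ 2 - C 1 := by simp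
  rw [h]
  have h2 : (X ^ 2 - C 1 : ℝ[X]).natDegree = 2 := by
    compute_degree!
  rw [natDegree_pow, h2]
  ring

-- derivatives of W vanish at ±1 below order n
lemma W_deriv_eval_one (n k : ℕ) (hk : k < n) :
    (derivative^[k] (W n)).eval 1 = 0 ∧ (derivative^[k] (W n)).eval (-1) = 0 := by
  rw [W_eq, Polynomial.iterate_derivative_mul]
  constructor <;>
  · rw [eval_finset_sum]
    apply Finset.sum_eq_zero
    intro i hi
    simp only [Finset.mem_range] at hi
    have h1 : n - (k - i) ≠ 0 := by omega
    have h2 : n - i ≠ 0 := by omega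
    rw [eval_smul, eval_mul, Polynomial.iterate_derivative_X_sub_pow,
      Polynomial.iterate_derivative_X_sub_pow, eval_smul, eval_smul]
    simp only [eval_pow, eval_sub, eval_X, eval_C, smul_eq_mul]
    first
      | (rw [show (1:ℝ) - 1 = 0 by norm_num, zero_pow h1]; ring)
      | (rw [show (-1:ℝ) - -1 = 0 by norm_num, zero_pow h2]; ring)

-- iterated integration by parts
lemma II_iter_parts (p : ℝ[X]) (n : ℕ)
    (hb : ∀ k < n, (derivative^[k] p).eval 1 = 0 ∧ (derivative^[k] p).eval (-1) = 0) :
    ∀ q : ℝ[X], II (derivative^[n] p * q) = (-1)^n * II (p * derivative^[n] q) := by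
  induction n with
  | zero => intro q; simp
  | succ n ih =>
    intro q
    have h1 : II (derivative^[n+1] p * q) = - II (derivative^[n] p * derivative q) := by
      rw [Function.iterate_succ_apply']
      rw [II_parts]
      have hb1 := hb n (by omega)
      rw [hb1.1, hb1.2]
      ring
    rw [h1, ih (fun k hk => hb k (by omega)) (derivative q), ← Function.iterate_succ_apply]
    ring

-- value of ∫ (x²-1)^n
lemma II_W (n : ℕ) : II (W n) = (-1)^n * 2^(2*n+1) * (n.factorial)^2 / (2*n+1).factorial := by
  induction n with
  | zero =>
    show II 1 = _
    rw [II_one]; norm_num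
  | succ n ih =>
    have key : derivative (X * W (n+1)) =
        ((2*n+3 : ℕ) : ℝ[X]) * W (n+1) + ((2*n+2 : ℕ) : ℝ[X]) * W n := by
      unfold W
      rw [derivative_mul, derivative_X, derivative_pow, derivative_sub, derivative_one,
        derivative_pow, derivative_X]
      simp only [map_natCast]
      push_cast
      ring
    have hder : II (derivative (X * W (n+1))) = 0 := by
      rw [II_derivative]
      have h1 : (W (n+1)).eval 1 = 0 := by unfold W; simp
      have h2 : (W (n+1)).eval (-1) = 0 := by unfold W; norm_num
      simp [h1, h2]
    rw [key, II_add, II_nat_mul, II_nat_mul, ih] at hder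
    have hne : ((2*n+3 : ℕ) : ℝ) ≠ 0 := by positivity
    have h3 : II (W (n+1)) = -(((2*n+2 : ℕ):ℝ) * ((-1)^n * 2^(2*n+1) * (n.factorial)^2 / (2*n+1).factorial)) / ((2*n+3 : ℕ):ℝ) := by
      field_simp at hder ⊢
      linarith [hder]
    rw [h3]
    have hf1 : ((n+1).factorial : ℝ) = (n+1) * n.factorial := by
      rw [Nat.factorial_succ]; push_cast; ring
    have hf2 : ((2*(n+1)+1).factorial : ℝ) = (2*n+3) * ((2*n+2) * (2*n+1).factorial) := by
      rw [show 2*(n+1)+1 = (2*n+2)+1 by ring, Nat.factorial_succ, Nat.factorial_succ]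
      push_cast; ring
    have hne1 : ((2*n+1).factorial : ℝ) ≠ 0 := by positivity
    rw [hf2, hf1]
    push_cast
    push_cast at ih
    field_simp
    ring

noncomputable def R (n : ℕ) : ℝ[X] := derivative^[n] (W n)

noncomputable def L (n : ℕ) : ℝ[X] := C (((2:ℝ)^n * n.factorial)⁻¹) * R n

-- leading coefficient of L
noncomputable def kk (n : ℕ) : ℝ := ((2*n).factorial) / (2^n * (n.factorial)^2)

lemma kk_pos (n : ℕ) : 0 < kk n := by
  unfold kk; positivity

lemma R_natDegree_le (n : ℕ) : (R n).natDegree ≤ n := by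
  unfold R
  have := Polynomial.natDegree_iterate_derivative (W n) n
  rw [W_natDegree] at this
  omega

lemma R_coeff (n : ℕ) : (R n).coeff n = (2*n).descFactorial n := by
  unfold R
  rw [Polynomial.coeff_iterate_derivative]
  have h1 : (W n).coeff (n + n) = 1 := by
    have := (W_monic n).coeff_natDegree
    rwa [W_natDegree, show 2*n = n+n by ring] at this
  rw [h1, show n + n = 2*n by ring]
  simp

lemma descFactorial_mul (n : ℕ) : (2*n).descFactorial n * n.factorial = (2*n).factorial := by
  rw [Nat.descFactorial_eq_factorial_mul_choose]
  rw [show (2*n).factorial = (2*n).choose n * n.factorial * (2*n-n).factorial from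
    (Nat.choose_mul_factorial_mul_factorial (by omega)).symm]
  rw [show 2*n-n = n by omega]
  ring

lemma descFactorial_cast (n : ℕ) : (((2*n).descFactorial n : ℕ) : ℝ) = (2*n).factorial / n.factorial := by
  rw [eq_div_iff (by positivity)]
  exact_mod_cast congrArg (Nat.cast : ℕ → ℝ) (descFactorial_mul n)

lemma L_natDegree_le (n : ℕ) : (L n).natDegree ≤ n :=
  (natDegree_C_mul_le _ _).trans (R_natDegree_le n)

lemma L_coeff (n : ℕ) : (L n).coeff n = kk n := by
  unfold L kk
  rw [coeff_C_mul, R_coeff, descFactorial_cast]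
  have h1 : (n.factorial : ℝ) ≠ 0 := by positivity
  have h2 : (2:ℝ)^n ≠ 0 := by positivity
  rw [eq_div_iff (by positivity)]
  field_simp

lemma L_eval_one (n : ℕ) : (L n).eval 1 = 1 := by
  have hR : (R n).eval 1 = 2^n * n.factorial := by
    unfold R
    rw [W_eq, Polynomial.iterate_derivative_mul, eval_finset_sum]
    rw [Finset.sum_eq_single 0]
    · rw [eval_smul, eval_mul, Polynomial.iterate_derivative_X_sub_pow,
        Polynomial.iterate_derivative_X_sub_pow]
      simp [Nat.descFactorial_self]
      ring
    · intro i hi hne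
      rw [eval_smul, eval_mul, Polynomial.iterate_derivative_X_sub_pow]
      have hi' : i ≤ n := by
        simp only [Finset.mem_range] at hi; omega
      have h1 : n - (n - i) ≠ 0 := by omega
      rw [eval_smul]
      simp [zero_pow h1]
    · intro h
      simp at h
  unfold L
  rw [eval_mul, eval_C, hR]
  have : (2:ℝ)^n * n.factorial ≠ 0 := by positivity
  field_simp

-- orthogonality
lemma L_orth (n : ℕ) (q : ℝ[X]) (hq : q.natDegree < n) : II (L n * q) = 0 := by
  unfold L
  rw [mul_assoc, II_C_mul]
  have : II (R n * q) = 0 := by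
    unfold R
    rw [II_iter_parts (W n) n (fun k hk => W_deriv_eval_one n k hk) q]
    rw [Polynomial.iterate_derivative_eq_zero hq]
    simp [II]
  rw [this, mul_zero]

-- norm
lemma L_norm (n : ℕ) : II (L n * L n) = 2 / (2*n+1) := by
  have hD : derivative^[n] (R n) = C (((2*n).factorial : ℝ)) := by
    unfold R
    rw [← Function.iterate_add_apply]
    have hdeg : (derivative^[n+n] (W n)).natDegree ≤ 0 := by
      have := Polynomial.natDegree_iterate_derivative (W n) (n+n)
      rw [W_natDegree] at this
      omega
    have hc : (derivative^[n+n] (W n)).coeff 0 = (2*n).factorial := by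
      rw [Polynomial.coeff_iterate_derivative]
      have h1 : (W n).coeff (0 + (n+n)) = 1 := by
        have := (W_monic n).coeff_natDegree
        rwa [W_natDegree, show 2*n = 0+(n+n) by ring] at this
      rw [h1, nsmul_eq_mul, mul_one]
      rw [show (0:ℕ)+(n+n) = 2*n by ring]
      rw [show n+n = 2*n by ring, Nat.descFactorial_self]
    rw [Polynomial.eq_C_of_natDegree_le_zero hdeg, hc]
  have hRR : II (R n * R n) = (2*n).factorial * ((-1)^n * II (W n)) := by
    have h := II_iter_parts (W n) n (fun k hk => W_deriv_eval_one n k hk) (R n)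
    unfold R at h ⊢
    rw [h]
    show _ = _ * ((-1:ℝ)^n * II (W n))
    rw [show derivative^[n] (derivative^[n] (W n)) = derivative^[n] (R n) from rfl, hD]
    rw [mul_comm (W n) _, II_C_mul]
    ring
  unfold L
  rw [show C (((2:ℝ)^n * n.factorial)⁻¹) * R n * (C (((2:ℝ)^n * n.factorial)⁻¹) * R n)
    = C (((2:ℝ)^n * n.factorial)⁻¹) * (C (((2:ℝ)^n * n.factorial)⁻¹) * (R n * R n)) by ring]
  rw [II_C_mul, II_C_mul, hRR, II_W]
  have hs : ((-1:ℝ))^n * ((-1:ℝ)^n * 2^(2*n+1) * (n.factorial:ℝ)^2 / ((2*n+1).factorial : ℝ))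
      = 2^(2*n+1) * (n.factorial:ℝ)^2 / ((2*n+1).factorial : ℝ) := by
    rcases neg_one_pow_eq_or ℝ n with h | h <;> rw [h] <;> ring
  rw [hs]
  have h1 : ((2*n+1).factorial : ℝ) = (2*n+1) * (2*n).factorial := by
    rw [Nat.factorial_succ]; push_cast; ring
  rw [h1]
  have h2 : (2:ℝ)^n * n.factorial ≠ 0 := by positivity
  have h3 : ((2*n).factorial : ℝ) ≠ 0 := by positivity
  have h4 : ((2:ℝ)*n+1) ≠ 0 := by positivity
  field_simp
  ring

-- ### parity
lemma coeff_comp_neg_X (p : ℝ[X]) (k : ℕ) : (p.comp (-X)).coeff k = (-1)^k * p.coeff k := by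
  induction p using Polynomial.induction_on' with
  | add p q hp hq => simp [add_comp, hp, hq]; ring
  | monomial m a =>
    rw [monomial_comp]
    have : (-X : ℝ[X])^m = C ((-1)^m) * X^m := by
      rw [neg_pow]
      simp [map_pow]
    rw [this, ← mul_assoc, ← C_mul, coeff_C_mul, coeff_monomial, coeff_X_pow]
    by_cases h : m = k
    · subst h; simp; ring
    · simp [h, Ne.symm h]

lemma W_comp_neg_X (n : ℕ) : (W n).comp (-X) = W n := by
  unfold W
  rw [pow_comp, sub_comp, pow_comp, X_comp, one_comp]
  ring

lemma iterate_derivative_comp_neg_X (p : ℝ[X]) (n : ℕ) :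
    derivative^[n] (p.comp (-X)) = (-1)^n * (derivative^[n] p).comp (-X) := by
  induction n with
  | zero => simp
  | succ n ih =>
    rw [Function.iterate_succ_apply', ih]
    rw [derivative_mul, derivative_pow]
    simp only [derivative_neg, derivative_one, derivative_X]  -- derivative ((-1)^n) = 0
    rw [derivative_comp]
    simp only [derivative_neg, derivative_X]
    rw [Function.iterate_succ_apply']
    ring

lemma R_comp_neg_X (n : ℕ) : (R n).comp (-X) = (-1)^n * R n := by
  have h := iterate_derivative_comp_neg_X (W n) n
  rw [W_comp_neg_X] at h
  unfold R
  have hsq : ((-1:ℝ[X])^n) * ((-1:ℝ[X])^n) = 1 := by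
    rw [← mul_pow]; norm_num
  have h3 : (-1:ℝ[X])^n * derivative^[n] (W n) = (derivative^[n] (W n)).comp (-X) := by
    nth_rewrite 1 [h]
    rw [← mul_assoc, hsq, one_mul]
  exact h3.symm

lemma L_comp_neg_X (n : ℕ) : (L n).comp (-X) = (-1)^n * L n := by
  unfold L
  rw [mul_comp, C_comp, R_comp_neg_X]
  ring

lemma neg_one_pow_C (n : ℕ) : ((-1:ℝ[X]))^n = C ((-1:ℝ)^n) := by
  rw [map_pow, map_neg, map_one]

lemma dL_comp_neg_X (n : ℕ) : (derivative (L n)).comp (-X) = (-1)^(n+1) * derivative (L n) := by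
  have h1 : derivative ((L n).comp (-X)) = -(derivative (L n)).comp (-X) := by
    rw [derivative_comp]
    simp
  rw [L_comp_neg_X, neg_one_pow_C, derivative_C_mul] at h1
  have h2 : (derivative (L n)).comp (-X) = -(C ((-1:ℝ)^n) * derivative (L n)) := by
    rw [h1]; ring
  rw [h2, neg_one_pow_C]
  rw [show ((-1:ℝ))^(n+1) = -(-1:ℝ)^n by ring, map_neg]
  ring

-- degree helper
lemma natDegree_le_of_coeff_zero (p : ℝ[X]) (m : ℕ) (hdeg : p.natDegree ≤ m + 1)
    (hc : p.coeff (m+1) = 0) : p.natDegree ≤ m := by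
  rw [natDegree_le_iff_coeff_eq_zero] at hdeg ⊢
  intro k hk
  rcases eq_or_lt_of_le (Nat.succ_le_of_lt hk) with h | h
  · subst h; exact hc
  · exact hdeg k (by omega)

-- square-integral zero
lemma self_eq_zero (u : ℝ[X]) (h : II (u * u) = 0) : u = 0 := by
  have := eq_zero_of_II_eq_zero (u * u) (fun x _ => by rw [eval_mul]; exact mul_self_nonneg _) h
  exact (mul_self_eq_zero).mp this

-- representation lemma
lemma eq_smul_L (g : ℝ[X]) (m : ℕ) (hdeg : g.natDegree ≤ m)
    (horth : ∀ p : ℝ[X], p.natDegree < m → II (g * p) = 0) :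
    g = C (g.coeff m / kk m) * L m := by
  set u := g - C (g.coeff m / kk m) * L m with hu
  have hcu : u.coeff m = 0 := by
    rw [hu, coeff_sub, coeff_C_mul, L_coeff]
    field_simp [(kk_pos m).ne']
    ring
  have hdu : u.natDegree ≤ m := by
    apply natDegree_le_iff_coeff_eq_zero.mpr
    intro k hk
    rw [hu, coeff_sub, coeff_C_mul]
    rw [natDegree_le_iff_coeff_eq_zero.mp hdeg k hk,
      natDegree_le_iff_coeff_eq_zero.mp (L_natDegree_le m) k hk]
    ring
  have huz : u = 0 := by
    by_cases hm : m = 0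
    · subst hm
      have := Polynomial.eq_C_of_natDegree_le_zero hdu
      rw [this, hcu]
      simp
    · by_contra hne
      have hlt : u.natDegree < m := by
        rcases lt_or_eq_of_le hdu with h | h
        · exact h
        · exfalso
          have hlc := Polynomial.leadingCoeff_ne_zero.mpr hne
          rw [Polynomial.leadingCoeff, h] at hlc
          exact hlc hcu
      have h1 : II (u * u) = 0 := by
        have hg : II (g * u) = 0 := horth u hlt
        have hL : II (L m * u) = 0 := L_orth m u hlt
        have : II (u * u) = II (g * u) - (g.coeff m / kk m) * II (L m * u) := by
          rw [hu]
          rw [show (g - C (g.coeff m / kk m) * L m) * u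
            = g * u - C (g.coeff m / kk m) * (L m * u) by ring]
          rw [II_sub, II_C_mul]
        rw [this, hg, hL]
        ring
      exact hne (self_eq_zero u h1)
  have hz : g - C (g.coeff m / kk m) * L m = 0 := by rw [← hu]; exact huz
  exact sub_eq_zero.mp hz

lemma natDegree_X2_sub_one : (X^2 - 1 : ℝ[X]).natDegree = 2 := by
  have h : (X ^ 2 - 1 : ℝ[X]) = X ^ 2 - C 1 := by simp
  rw [h]
  compute_degree!

lemma kk_rec (m : ℕ) : ((m+1):ℝ) * kk (m+1) = (2*m+1) * kk m := by
  unfold kk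
  have h1 : ((2*(m+1)).factorial : ℝ) = (2*m+2) * ((2*m+1) * (2*m).factorial) := by
    rw [show 2*(m+1) = (2*m+1)+1 by ring, Nat.factorial_succ, Nat.factorial_succ]
    push_cast; ring
  have h2 : ((m+1).factorial : ℝ) = (m+1) * m.factorial := by
    rw [Nat.factorial_succ]; push_cast; ring
  rw [h1, h2]
  have h3 : (m.factorial : ℝ) ≠ 0 := by positivity
  have h4 : (2:ℝ)^m ≠ 0 := by positivity
  field_simp
  ring

lemma coeff_natCast_mul (k : ℕ) (p : ℝ[X]) (i : ℕ) :
    ((k : ℝ[X]) * p).coeff i = k * p.coeff i := by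
  rw [← map_natCast (C : ℝ →+* ℝ[X]) k, coeff_C_mul]

lemma II_natCast_mul (k : ℕ) (p : ℝ[X]) : II ((k : ℝ[X]) * p) = k * II p := by
  rw [← map_natCast (C : ℝ →+* ℝ[X]) k, II_C_mul]

-- the two main identities
lemma deriv_identity (n : ℕ) :
    (X^2 - 1) * derivative (L (n+1)) =
      ((n+1:ℕ) : ℝ[X]) * (X * L (n+1)) - ((n+1:ℕ) : ℝ[X]) * L n := by
  set g : ℝ[X] := (X^2 - 1) * derivative (L (n+1)) - ((n+1:ℕ) : ℝ[X]) * (X * L (n+1))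
      + ((n+1:ℕ) : ℝ[X]) * L n with hg
  have hdL : (derivative (L (n+1))).natDegree ≤ n := by
    have := Polynomial.natDegree_derivative_le (L (n+1))
    have h2 := L_natDegree_le (n+1)
    omega
  -- degree ≤ n+2
  have hdeg2 : g.natDegree ≤ n + 2 := by
    rw [hg]
    apply (natDegree_add_le _ _).trans
    apply max_le
    · apply (natDegree_sub_le _ _).trans
      apply max_le
      · apply (natDegree_mul_le).trans
        rw [natDegree_X2_sub_one]
        omega
      · apply (natDegree_mul_le).trans
        have h1 : ((n+1:ℕ) : ℝ[X]).natDegree = 0 := natDegree_natCast _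
        have h2 : ((X : ℝ[X]) * L (n+1)).natDegree ≤ n + 2 := by
          apply (natDegree_mul_le).trans
          have := L_natDegree_le (n+1)
          simp only [natDegree_X]
          omega
        omega
    · apply (natDegree_mul_le).trans
      have := L_natDegree_le n
      have h1 : ((n+1:ℕ) : ℝ[X]).natDegree = 0 := natDegree_natCast _
      omega
  -- coeff n+2 = 0
  have hc2 : g.coeff (n+2) = 0 := by
    rw [hg]
    rw [coeff_add, coeff_sub]
    rw [show (X^2 - 1) * derivative (L (n+1)) = X^2 * derivative (L (n+1)) - derivative (L (n+1)) by ring]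
    rw [coeff_sub, Polynomial.coeff_X_pow_mul]
    rw [coeff_natCast_mul, coeff_natCast_mul, coeff_X_mul]
    rw [coeff_derivative, L_coeff]
    have hz1 : (derivative (L (n+1))).coeff (n+2) = 0 :=
      natDegree_le_iff_coeff_eq_zero.mp hdL (n+2) (by omega)
    have hz2 : (L n).coeff (n+2) = 0 :=
      natDegree_le_iff_coeff_eq_zero.mp (L_natDegree_le n) (n+2) (by omega)
    rw [hz1, hz2]
    push_cast
    ring
  -- parity
  have hpar : g.comp (-X) = (-1:ℝ[X])^n * g := by
    rw [hg]
    simp only [add_comp, sub_comp, mul_comp, natCast_comp, X_comp, pow_comp, one_comp]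
    rw [L_comp_neg_X, L_comp_neg_X, dL_comp_neg_X]
    ring
  have hc1 : g.coeff (n+1) = 0 := by
    have h1 : (g.comp (-X)).coeff (n+1) = (-1:ℝ)^(n+1) * g.coeff (n+1) :=
      coeff_comp_neg_X g (n+1)
    rw [hpar, neg_one_pow_C, coeff_C_mul] at h1
    rcases neg_one_pow_eq_or ℝ n with h | h <;>
      rw [h] at h1 <;> rw [pow_succ, h] at h1 <;> nlinarith [h1]
  have hdeg : g.natDegree ≤ n :=
    natDegree_le_of_coeff_zero g n (natDegree_le_of_coeff_zero g (n+1) hdeg2 hc2) hc1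
  -- orthogonality
  have horth : ∀ p : ℝ[X], p.natDegree < n → II (g * p) = 0 := by
    intro p hp
    have e1 : II ((X^2 - 1) * derivative (L (n+1)) * p) = 0 := by
      have hrw : (X^2 - 1) * derivative (L (n+1)) * p = derivative (L (n+1)) * ((X^2-1) * p) := by
        ring
      rw [hrw, II_parts]
      have hb1 : ((X^2-1 : ℝ[X]) * p).eval 1 = 0 := by simp
      have hb2 : ((X^2-1 : ℝ[X]) * p).eval (-1) = 0 := by norm_num
      rw [hb1, hb2]
      have hd : (derivative ((X^2-1) * p)).natDegree < n + 1 := by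
        have h1 : ((X^2-1 : ℝ[X]) * p).natDegree ≤ n + 1 := by
          apply (natDegree_mul_le).trans
          rw [natDegree_X2_sub_one]
          omega
        have := Polynomial.natDegree_derivative_le ((X^2-1 : ℝ[X]) * p)
        omega
      rw [L_orth (n+1) _ hd]
      ring
    have e2 : II (((n+1:ℕ) : ℝ[X]) * (X * L (n+1)) * p) = 0 := by
      have hrw : ((n+1:ℕ) : ℝ[X]) * (X * L (n+1)) * p = ((n+1:ℕ) : ℝ[X]) * (L (n+1) * (X * p)) := by
        ring
      rw [hrw, II_natCast_mul]
      have hd : ((X : ℝ[X]) * p).natDegree < n + 1 := by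
        apply lt_of_le_of_lt (natDegree_mul_le)
        simp only [natDegree_X]
        omega
      rw [L_orth (n+1) _ hd]
      ring
    have e3 : II (((n+1:ℕ) : ℝ[X]) * L n * p) = 0 := by
      rw [show ((n+1:ℕ) : ℝ[X]) * L n * p = ((n+1:ℕ) : ℝ[X]) * (L n * p) by ring, II_natCast_mul]
      rw [L_orth n p hp]
      ring
    have hrw : g * p = ((X^2 - 1) * derivative (L (n+1)) * p - ((n+1:ℕ) : ℝ[X]) * (X * L (n+1)) * p)
        + ((n+1:ℕ) : ℝ[X]) * L n * p := by
      rw [hg]; ring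
    rw [hrw, II_add, II_sub, e1, e2, e3]
    ring
  have hrep := eq_smul_L g n hdeg horth
  have hev : g.eval 1 = 0 := by
    rw [hg]
    simp [L_eval_one]
  rw [hrep] at hev
  rw [eval_mul, eval_C, L_eval_one, mul_one] at hev
  rw [hev] at hrep
  rw [map_zero, zero_mul] at hrep
  have hzero : g = 0 := hrep
  rw [hg] at hzero
  linear_combination hzero

lemma recurrence (n : ℕ) :
    ((n+2:ℕ) : ℝ[X]) * L (n+2) =
      ((2*n+3:ℕ) : ℝ[X]) * (X * L (n+1)) - ((n+1:ℕ) : ℝ[X]) * L n := by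
  set g : ℝ[X] := ((n+2:ℕ) : ℝ[X]) * L (n+2) - ((2*n+3:ℕ) : ℝ[X]) * (X * L (n+1))
      + ((n+1:ℕ) : ℝ[X]) * L n with hg
  have hdeg2 : g.natDegree ≤ n + 2 := by
    rw [hg]
    apply (natDegree_add_le _ _).trans
    apply max_le
    · apply (natDegree_sub_le _ _).trans
      apply max_le
      · apply (natDegree_mul_le).trans
        have := L_natDegree_le (n+2)
        have h1 : ((n+2:ℕ) : ℝ[X]).natDegree = 0 := natDegree_natCast _
        omega
      · apply (natDegree_mul_le).trans
        have h1 : ((2*n+3:ℕ) : ℝ[X]).natDegree = 0 := natDegree_natCast _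
        have h2 : ((X : ℝ[X]) * L (n+1)).natDegree ≤ n + 2 := by
          apply (natDegree_mul_le).trans
          have := L_natDegree_le (n+1)
          simp only [natDegree_X]
          omega
        omega
    · apply (natDegree_mul_le).trans
      have := L_natDegree_le n
      have h1 : ((n+1:ℕ) : ℝ[X]).natDegree = 0 := natDegree_natCast _
      omega
  have hc2 : g.coeff (n+2) = 0 := by
    rw [hg, coeff_add, coeff_sub, coeff_natCast_mul, coeff_natCast_mul, coeff_natCast_mul,
      coeff_X_mul, L_coeff, L_coeff]
    have hz2 : (L n).coeff (n+2) = 0 :=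
      natDegree_le_iff_coeff_eq_zero.mp (L_natDegree_le n) (n+2) (by omega)
    rw [hz2]
    have := kk_rec (n+1)
    push_cast at this ⊢
    nlinarith [this]
  have hpar : g.comp (-X) = (-1:ℝ[X])^n * g := by
    rw [hg]
    simp only [add_comp, sub_comp, mul_comp, natCast_comp, X_comp, pow_comp, one_comp]
    rw [L_comp_neg_X, L_comp_neg_X, L_comp_neg_X]
    ring
  have hc1 : g.coeff (n+1) = 0 := by
    have h1 : (g.comp (-X)).coeff (n+1) = (-1:ℝ)^(n+1) * g.coeff (n+1) :=
      coeff_comp_neg_X g (n+1)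
    rw [hpar, neg_one_pow_C, coeff_C_mul] at h1
    rcases neg_one_pow_eq_or ℝ n with h | h <;>
      rw [h] at h1 <;> rw [pow_succ, h] at h1 <;> nlinarith [h1]
  have hdeg : g.natDegree ≤ n :=
    natDegree_le_of_coeff_zero g n (natDegree_le_of_coeff_zero g (n+1) hdeg2 hc2) hc1
  have horth : ∀ p : ℝ[X], p.natDegree < n → II (g * p) = 0 := by
    intro p hp
    have e1 : II (((n+2:ℕ) : ℝ[X]) * L (n+2) * p) = 0 := by
      rw [show ((n+2:ℕ) : ℝ[X]) * L (n+2) * p = ((n+2:ℕ) : ℝ[X]) * (L (n+2) * p) by ring,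
        II_natCast_mul, L_orth (n+2) p (by omega)]
      ring
    have e2 : II (((2*n+3:ℕ) : ℝ[X]) * (X * L (n+1)) * p) = 0 := by
      rw [show ((2*n+3:ℕ) : ℝ[X]) * (X * L (n+1)) * p = ((2*n+3:ℕ) : ℝ[X]) * (L (n+1) * (X * p)) by ring,
        II_natCast_mul]
      have hd : ((X : ℝ[X]) * p).natDegree < n + 1 := by
        apply lt_of_le_of_lt (natDegree_mul_le)
        simp only [natDegree_X]
        omega
      rw [L_orth (n+1) _ hd]
      ring
    have e3 : II (((n+1:ℕ) : ℝ[X]) * L n * p) = 0 := by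
      rw [show ((n+1:ℕ) : ℝ[X]) * L n * p = ((n+1:ℕ) : ℝ[X]) * (L n * p) by ring, II_natCast_mul,
        L_orth n p hp]
      ring
    have hrw : g * p = (((n+2:ℕ) : ℝ[X]) * L (n+2) * p - ((2*n+3:ℕ) : ℝ[X]) * (X * L (n+1)) * p)
        + ((n+1:ℕ) : ℝ[X]) * L n * p := by
      rw [hg]; ring
    rw [hrw, II_add, II_sub, e1, e2, e3]
    ring
  have hrep := eq_smul_L g n hdeg horth
  have hev : g.eval 1 = 0 := by
    rw [hg]
    simp [L_eval_one]
    push_cast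
    ring
  rw [hrep] at hev
  rw [eval_mul, eval_C, L_eval_one, mul_one] at hev
  rw [hev] at hrep
  rw [map_zero, zero_mul] at hrep
  have hzero : g = 0 := hrep
  rw [hg] at hzero
  linear_combination hzero

lemma L_zero : L 0 = 1 := by
  unfold L R W
  simp

lemma L_one : L 1 = X := by
  unfold L R W
  simp only [pow_one, Function.iterate_one, derivative_sub, derivative_one, derivative_X_pow]
  norm_num
  rw [← mul_assoc, ← C_mul]
  norm_num

theorem stmt_7 (N : ℕ) (hN : 1 ≤ N)
    (ξ ρ : Fin (N + 1) → ℝ)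
    (hmono : StrictMono ξ) (hfirst : ξ 0 = -1) (hlast : ξ (Fin.last N) = 1)
    (hquad : ∀ φ : Polynomial ℝ, φ.natDegree ≤ 2 * N - 1 →
      ∫ ζ in (-1 : ℝ)..1, φ.eval ζ = ∑ i : Fin (N + 1), φ.eval (ξ i) * ρ i) :
    ∀ φN : Polynomial ℝ, φN.natDegree ≤ N →
      (∫ ζ in (-1 : ℝ)..1, φN.eval ζ ^ 2) ≤
        (∑ i : Fin (N + 1), φN.eval (ξ i) ^ 2 * ρ i) ∧
      (∑ i : Fin (N + 1), φN.eval (ξ i) ^ 2 * ρ i) ≤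
        3 * ∫ ζ in (-1 : ℝ)..1, φN.eval ζ ^ 2 := by
  obtain ⟨M, rfl⟩ : ∃ M, N = M + 1 := ⟨N - 1, by omega⟩
  intro φ hφ
  classical
  set Q : ℝ[X] → ℝ := fun p => ∑ i : Fin (M + 2), p.eval (ξ i) * ρ i with hQdef
  have hquad' : ∀ p : ℝ[X], p.natDegree ≤ 2 * M + 1 → II p = Q p := by
    intro p hp
    have := hquad p (by omega)
    exact this
  have QC : ∀ (c : ℝ) (p : ℝ[X]), Q (C c * p) = c * Q p := by
    intro c p
    simp only [hQdef, eval_mul, eval_C, Finset.mul_sum]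
    exact Finset.sum_congr rfl (fun i _ => by ring)
  have Qadd : ∀ p q : ℝ[X], Q (p + q) = Q p + Q q := by
    intro p q
    simp only [hQdef, eval_add, add_mul]
    rw [Finset.sum_add_distrib]
  -- node polynomial
  set ω : ℝ[X] := ∏ i : Fin (M+2), (X - C (ξ i)) with hωdef
  have hωmonic : ω.Monic := monic_prod_of_monic _ _ (fun i _ => monic_X_sub_C _)
  have hωdeg : ω.natDegree = M + 2 := by
    rw [hωdef, natDegree_prod_of_monic _ _ (fun i _ => monic_X_sub_C _)]
    simp
  have hωroot : ∀ i, ω.eval (ξ i) = 0 := by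
    intro i
    rw [hωdef, eval_prod]
    apply Finset.prod_eq_zero (Finset.mem_univ i)
    simp
  have hωQ : ∀ p : ℝ[X], Q (ω * p) = 0 := by
    intro p
    apply Finset.sum_eq_zero
    intro i _
    rw [eval_mul, hωroot]
    ring
  have hω1 : ω.eval 1 = 0 := by
    have := hωroot (Fin.last (M+1))
    rwa [hlast] at this
  have hωm1 : ω.eval (-1) = 0 := by
    have := hωroot 0
    rwa [hfirst] at this
  have horthω : ∀ p : ℝ[X], p.natDegree + 2 ≤ M + 1 → II (ω * p) = 0 := by
    intro p hp
    rw [hquad' _ (by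
      apply (natDegree_mul_le).trans
      omega)]
    exact hωQ p
  -- node characterization : ω = C c * ((X^2-1) * derivative (L (M+1)))
  set V : ℝ[X] := (X^2 - 1) * derivative (L (M+1)) with hVdef
  have hdL : (derivative (L (M+1))).natDegree ≤ M := by
    have := Polynomial.natDegree_derivative_le (L (M+1))
    have h2 := L_natDegree_le (M+1)
    omega
  have hVdeg : V.natDegree ≤ M + 2 := by
    rw [hVdef]
    apply (natDegree_mul_le).trans
    rw [natDegree_X2_sub_one]
    omega
  have hVcoeff : V.coeff (M+2) = (M+1) * kk (M+1) := by
    rw [hVdef, show (X^2 - 1) * derivative (L (M+1))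
      = X^2 * derivative (L (M+1)) - derivative (L (M+1)) by ring]
    rw [coeff_sub, Polynomial.coeff_X_pow_mul, coeff_derivative, L_coeff]
    rw [natDegree_le_iff_coeff_eq_zero.mp hdL (M+2) (by omega)]
    push_cast
    ring
  set cc : ℝ := (((M:ℝ)+1) * kk (M+1))⁻¹ with hccdef
  have hccne : ((M:ℝ)+1) * kk (M+1) ≠ 0 := by
    have := kk_pos (M+1)
    positivity
  set d : ℝ[X] := ω - C cc * V with hddef
  have hdcoeff : d.coeff (M+2) = 0 := by
    rw [hddef, coeff_sub, coeff_C_mul, hVcoeff]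
    have hlead : ω.coeff (M+2) = 1 := by
      have := hωmonic.coeff_natDegree
      rwa [hωdeg] at this
    rw [hlead, hccdef]
    field_simp
    rw [div_self (kk_pos (M+1)).ne', sub_self]
  have hddeg : d.natDegree ≤ M + 1 := by
    apply natDegree_le_of_coeff_zero _ _ _ hdcoeff
    rw [hddef]
    apply (natDegree_sub_le _ _).trans
    apply max_le
    · omega
    · exact (natDegree_C_mul_le _ _).trans hVdeg
  have hV1 : V.eval 1 = 0 := by rw [hVdef]; simp
  have hVm1 : V.eval (-1) = 0 := by rw [hVdef]; norm_num
  have hd1 : d.eval 1 = 0 := by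
    rw [hddef, eval_sub, eval_mul, eval_C, hω1, hV1]; ring
  have hdm1 : d.eval (-1) = 0 := by
    rw [hddef, eval_sub, eval_mul, eval_C, hωm1, hVm1]; ring
  -- factor out (X^2 - 1)
  have hdvd : (X - C 1) * (X - C (-1)) ∣ d := by
    apply IsCoprime.mul_dvd
    · exact Polynomial.isCoprime_X_sub_C_of_isUnit_sub (by norm_num)
    · exact dvd_iff_isRoot.mpr hd1
    · exact dvd_iff_isRoot.mpr hdm1
  obtain ⟨e, he⟩ := hdvd
  have hfac : ((X : ℝ[X]) - C 1) * (X - C (-1)) = X^2 - 1 := by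
    rw [map_neg, map_one]
    ring
  rw [hfac] at he
  have he0 : e = 0 := by
    by_contra hee
    have hX2ne : (X^2 - 1 : ℝ[X]) ≠ 0 := by
      intro h
      have := natDegree_X2_sub_one
      rw [h] at this
      simp at this
    have hdege : e.natDegree + 2 ≤ M + 1 := by
      have := natDegree_mul hX2ne hee
      rw [← he] at this
      rw [natDegree_X2_sub_one] at this
      omega
    have hIde : II (d * e) = 0 := by
      have h1 : II (ω * e) = 0 := horthω e hdege
      have h2 : II (V * e) = 0 := by
        have hrw : V * e = derivative (L (M+1)) * ((X^2 - 1) * e) := by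
          rw [hVdef]; ring
        rw [hrw, ← he, II_parts, hd1, hdm1]
        have hdd : (derivative d).natDegree < M + 1 := by
          have := Polynomial.natDegree_derivative_le d
          omega
        rw [L_orth (M+1) _ hdd]
        ring
      have hrw2 : d * e = ω * e - C cc * (V * e) := by
        rw [hddef]; ring
      rw [hrw2, II_sub, II_C_mul, h1, h2]
      ring
    have hprod : (1 - X^2) * (e * e) = 0 := by
      apply eq_zero_of_II_eq_zero
      · intro x hx
        simp only [eval_mul, eval_sub, eval_one, eval_pow, eval_X]
        have h1 : x^2 ≤ 1 := by
          rcases hx with ⟨h1, h2⟩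
          nlinarith
        nlinarith [mul_self_nonneg (e.eval x)]
      · have hrw3 : (1 - X^2) * (e * e) = -(d * e) := by
          rw [he]; ring
        rw [hrw3, II_neg, hIde]
        ring
    rcases mul_eq_zero.mp hprod with h | h
    · have : (X^2 - 1 : ℝ[X]) = 0 := by
        have : (X^2 - 1 : ℝ[X]) = -(1 - X^2) := by ring
        rw [this, h]; ring
      exact hX2ne this
    · exact hee (mul_self_eq_zero.mp h)
  have hd0 : d = 0 := by rw [he, he0]; ring
  have hωV : ω = C cc * V := by
    have := sub_eq_zero.mp (hddef ▸ hd0)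
    exact this
  have hccne2 : cc ≠ 0 := by
    rw [hccdef]
    exact inv_ne_zero hccne
  have hnode : ∀ i, (ξ i^2 - 1) * (derivative (L (M+1))).eval (ξ i) = 0 := by
    intro i
    have h0 := hωroot i
    rw [hωV, eval_mul, eval_C] at h0
    have hVz : V.eval (ξ i) = 0 := by
      rcases mul_eq_zero.mp h0 with h | h
      · exact absurd h hccne2
      · exact h
    rw [hVdef, eval_mul] at hVz
    simpa using hVz
  have hLrel : ∀ i, (L M).eval (ξ i) = ξ i * (L (M+1)).eval (ξ i) := by
    intro i
    have hid := congrArg (eval (ξ i)) (deriv_identity M)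
    simp only [eval_mul, eval_sub, eval_pow, eval_X, eval_natCast, eval_one] at hid
    have hz := hnode i
    have hM1 : ((M:ℝ)+1) ≠ 0 := by positivity
    apply mul_left_cancel₀ hM1
    push_cast at hid
    nlinarith [hid, hz]
  -- discrete norm of L (M+1)
  have hS : Q (L (M+1) * L (M+1)) = 2 / ((M:ℝ)+1) := by
    rcases Nat.eq_zero_or_pos M with hM0 | hM1
    · subst hM0
      have hQ1 : Q 1 = 2 := by
        rw [← hquad' 1 (by simp), II_one]
      have heq : Q (L (0+1) * L (0+1)) = Q 1 := by
        simp only [hQdef]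
        apply Finset.sum_congr rfl
        intro i _
        have hrel := hLrel i
        simp only [L_zero, eval_one, show (0:ℕ)+1 = 1 from rfl, L_one, eval_X] at hrel
        simp only [show (0:ℕ)+1 = 1 from rfl, L_one, eval_mul, eval_X, eval_one]
        linear_combination (-(ρ i)) * hrel
      rw [heq, hQ1]
      norm_num
    · obtain ⟨K, rfl⟩ : ∃ K, M = K + 1 := ⟨M - 1, by omega⟩
      have hA : Q (L (K+1) * L (K+1)) = 2 / (2*((K:ℝ)+1)+1) := by
        rw [← hquad' _ (by
          apply (natDegree_mul_le).trans
          have := L_natDegree_le (K+1)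
          omega)]
        rw [L_norm (K+1)]
        push_cast
        ring_nf
      have h1 : ∑ i : Fin (K+3), (ξ i * (L (K+2)).eval (ξ i))^2 * ρ i = 2 / (2*(K:ℝ)+3) := by
        have : Q (L (K+1) * L (K+1)) = ∑ i : Fin (K+3), (ξ i * (L (K+2)).eval (ξ i))^2 * ρ i := by
          simp only [hQdef]
          apply Finset.sum_congr rfl
          intro i _
          rw [eval_mul, hLrel i]
          ring
        rw [← this, hA]
        norm_num
        ring_nf
      have hO : Q (L (K+2) * L K) = 0 := by
        rw [← hquad' _ (by
          apply (natDegree_mul_le).trans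
          have := L_natDegree_le (K+2)
          have := L_natDegree_le K
          omega)]
        exact L_orth (K+2) (L K) (by
          have := L_natDegree_le K
          omega)
      have hrec : ∀ i, ((K:ℝ)+1) * (L K).eval (ξ i) =
          (2*(K:ℝ)+3) * (ξ i * (ξ i * (L (K+2)).eval (ξ i))) - ((K:ℝ)+2) * (L (K+2)).eval (ξ i) := by
        intro i
        have hid := congrArg (eval (ξ i)) (recurrence K)
        simp only [eval_mul, eval_sub, eval_X, eval_natCast] at hid
        rw [hLrel i] at hid
        push_cast at hid
        linarith [hid]
      have key : ((K:ℝ)+1) * Q (L (K+2) * L K) =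
          (2*(K:ℝ)+3) * (∑ i : Fin (K+3), (ξ i * (L (K+2)).eval (ξ i))^2 * ρ i)
            - ((K:ℝ)+2) * Q (L (K+2) * L (K+2)) := by
        simp only [hQdef, eval_mul, Finset.mul_sum, ← Finset.sum_sub_distrib]
        apply Finset.sum_congr rfl
        intro i _
        have h := hrec i
        linear_combination ((L (K+2)).eval (ξ i) * ρ i) * h
      rw [hO, h1] at key
      have hK3 : (2*(K:ℝ)+3) ≠ 0 := by positivity
      have hK2 : ((K:ℝ)+2) ≠ 0 := by positivity
      have hgoal : Q (L (K+2) * L (K+2)) = 2 / ((K:ℝ)+2) := by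
        field_simp at key ⊢
        linarith [key]
      rw [show K+1+1 = K+2 from rfl, hgoal]
      push_cast
      ring_nf
  -- decomposition of φ
  set cφ : ℝ := φ.coeff (M+1) / kk (M+1) with hcφdef
  set r : ℝ[X] := φ - C cφ * L (M+1) with hrdef
  have hrcoeff : r.coeff (M+1) = 0 := by
    rw [hrdef, coeff_sub, coeff_C_mul, L_coeff, hcφdef]
    field_simp [(kk_pos (M+1)).ne']
    ring
  have hrdeg : r.natDegree ≤ M+1 := by
    rw [hrdef]
    apply (natDegree_sub_le _ _).trans
    exact max_le hφ ((natDegree_C_mul_le _ _).trans (L_natDegree_le _))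
  have hrcase : r = 0 ∨ r.natDegree < M + 1 := by
    rcases eq_or_ne r 0 with h | h
    · exact Or.inl h
    · right
      rcases lt_or_eq_of_le hrdeg with h2 | h2
      · exact h2
      · exfalso
        have hlc := Polynomial.leadingCoeff_ne_zero.mpr h
        rw [Polynomial.leadingCoeff, h2] at hlc
        exact hlc hrcoeff
  have hLr : II (L (M+1) * r) = 0 := by
    rcases hrcase with h | h
    · rw [h, mul_zero, II_zero]
    · exact L_orth (M+1) r h
  set mm : ℝ[X] := C (2*cφ) * (L (M+1) * r) + r * r with hmdef
  have hsplit : φ * φ = C (cφ^2) * (L (M+1) * L (M+1)) + mm := by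
    have hφeq : φ = C cφ * L (M+1) + r := by rw [hrdef]; ring
    rw [hmdef, hφeq]
    have hCsq : C (cφ^2) = C cφ * C cφ := by rw [← C_mul, sq]
    have hC2 : C (2*cφ) = C 2 * C cφ := by rw [← C_mul]
    rw [hCsq, hC2]
    have hC2' : (C 2 : ℝ[X]) = 2 := by
      rw [show (2:ℝ) = 1 + 1 by norm_num, map_add, map_one]
      norm_num
    rw [hC2']
    ring
  have hImQm : II mm = Q mm := by
    rcases hrcase with h | h
    · have hm0 : mm = 0 := by rw [hmdef, h]; ring
      rw [hm0, II_zero]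
      simp [hQdef]
    · apply hquad'
      rw [hmdef]
      apply (natDegree_add_le _ _).trans
      apply max_le
      · apply (natDegree_C_mul_le _ _).trans
        apply (natDegree_mul_le).trans
        have := L_natDegree_le (M+1)
        omega
      · apply (natDegree_mul_le).trans
        omega
  have hIrr : 0 ≤ II (r * r) :=
    II_nonneg _ (fun x _ => by rw [eval_mul]; exact mul_self_nonneg _)
  have hImge : 0 ≤ II mm := by
    have : II mm = 2*cφ * II (L (M+1) * r) + II (r*r) := by
      rw [hmdef, II_add, II_C_mul]
    rw [this, hLr]
    linarith
  have hIφ : II (φ * φ) = cφ^2 * (2/(2*((M:ℝ)+1)+1)) + II mm := by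
    rw [hsplit, II_add, II_C_mul, L_norm]
    push_cast
    ring
  have hQφ : Q (φ * φ) = cφ^2 * (2/((M:ℝ)+1)) + II mm := by
    rw [hsplit, Qadd, QC, hS, hImQm]
  have hIg : (∫ ζ in (-1:ℝ)..1, φ.eval ζ^2) = II (φ*φ) := by
    show _ = ∫ x in (-1:ℝ)..1, (φ*φ).eval x
    simp only [eval_mul, sq]
  have hQg : (∑ i : Fin (M+2), φ.eval (ξ i)^2 * ρ i) = Q (φ*φ) := by
    simp only [hQdef, eval_mul, sq]
  have hMpos : (0:ℝ) < (M:ℝ) + 1 := by positivity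
  have hMpos2 : (0:ℝ) < 2*((M:ℝ)+1) + 1 := by positivity
  have d1 : 2/(2*((M:ℝ)+1)+1) ≤ 2/((M:ℝ)+1) := by
    rw [div_le_div_iff₀ hMpos2 hMpos]
    nlinarith
  have d2 : 2/((M:ℝ)+1) ≤ 3 * (2/(2*((M:ℝ)+1)+1)) := by
    rw [show (3:ℝ) * (2/(2*((M:ℝ)+1)+1)) = 6/(2*((M:ℝ)+1)+1) by ring, div_le_div_iff₀ hMpos hMpos2]
    nlinarith
  have hsq : (0:ℝ) ≤ cφ^2 := sq_nonneg _
  constructor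
  · rw [hIg, hQg, hIφ, hQφ]
    nlinarith [mul_le_mul_of_nonneg_left d1 hsq]
  · rw [hIg, hQg, hIφ, hQφ]
    nlinarith [mul_le_mul_of_nonneg_left d2 hsq]
end

section
/- Let N ≥ 1 and let −1 = ξ₀ < ξ₁ < ⋯ < ξ_N = 1 and ρ₀, …, ρ_N be a Gauss–Lobatto family on [−1,1], i.e. for every real polynomial φ of degree at most 2N−1, ∫_{−1}^{1} φ(ζ) dζ = Σ_{i=0}^{N} φ(ξ_i) ρ_i. Then for every real polynomial p in two variables whose degree in each variable is at most N, ∫_{−1}^{1} ∫_{−1}^{1} p(x,y)² dx dy ≤ Σ_{i=0}^{N} Σ_{j=0}^{N} p(ξ_i, ξ_j)² ρ_i ρ_j ≤ 9 ∫_{−1}^{1} ∫_{−1}^{1} p(x,y)² dx dy. -/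
open Polynomial intervalIntegral


noncomputable def GLI (φ : Polynomial ℝ) : ℝ := ∫ x in (-1:ℝ)..1, φ.eval x

lemma GLI_integrable (φ : Polynomial ℝ) (a b : ℝ) :
    IntervalIntegrable (fun x => φ.eval x) MeasureTheory.volume a b :=
  (φ.continuous_aeval).intervalIntegrable a b

lemma GLI_add (φ ψ : Polynomial ℝ) : GLI (φ + ψ) = GLI φ + GLI ψ := by
  unfold GLI
  simp only [eval_add]
  exact integral_add (GLI_integrable φ _ _) (GLI_integrable ψ _ _)

lemma GLI_smul (c : ℝ) (φ : Polynomial ℝ) : GLI (C c * φ) = c * GLI φ := by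
  unfold GLI
  simp only [eval_mul, eval_C]
  exact integral_const_mul c _

lemma GLI_sub (φ ψ : Polynomial ℝ) : GLI (φ - ψ) = GLI φ - GLI ψ := by
  have := GLI_add (φ - ψ) ψ
  simp at this; linarith

lemma GLI_nonneg {φ : Polynomial ℝ} (h : ∀ x ∈ Set.Icc (-1:ℝ) 1, 0 ≤ φ.eval x) :
    0 ≤ GLI φ := integral_nonneg (by norm_num) h

lemma GLI_sq_nonneg (φ : Polynomial ℝ) : 0 ≤ GLI (φ * φ) := by
  apply GLI_nonneg; intro x _; simp only [eval_mul]; exact mul_self_nonneg _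

lemma GLI_deriv (φ : Polynomial ℝ) :
    GLI (derivative φ) = φ.eval 1 - φ.eval (-1) := by
  unfold GLI
  apply integral_deriv_eq_sub' (fun x => φ.eval x)
  · funext x; exact Polynomial.deriv (p := φ)
  · intro x _; exact φ.differentiable.differentiableAt
  · exact (φ.derivative.continuous_aeval).continuousOn

lemma GLI_by_parts (f g : Polynomial ℝ) :
    GLI (derivative f * g) =
      f.eval 1 * g.eval 1 - f.eval (-1) * g.eval (-1) - GLI (f * derivative g) := by
  have h := GLI_deriv (f * g)
  rw [derivative_mul, GLI_add] at h
  simp only [eval_mul] at h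
  linarith


section
noncomputable def GLu (N : ℕ) : Polynomial ℝ := ((X:Polynomial ℝ)^2 - 1)^N
noncomputable def GLuk (N k : ℕ) : Polynomial ℝ := derivative^[k] (GLu N)

lemma GLuk_succ (N k : ℕ) : GLuk N (k+1) = derivative (GLuk N k) := by
  unfold GLuk; rw [Function.iterate_succ_apply']

lemma GLuk_vanish (N k : ℕ) (hk : k < N) :
    ∃ g : Polynomial ℝ, GLuk N k = ((X:Polynomial ℝ)^2 - 1)^(N-k) * g := by
  induction k with
  | zero => exact ⟨1, by simp [GLuk, GLu]⟩
  | succ k ih =>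
    obtain ⟨g, hg⟩ := ih (Nat.lt_of_succ_lt hk)
    have hm : N - k = (N - (k+1)) + 1 := by omega
    refine ⟨C ((N-k : ℕ):ℝ) * (2*X) * g + ((X:Polynomial ℝ)^2 - 1) * derivative g, ?_⟩
    rw [GLuk_succ, hg, derivative_mul, derivative_pow]
    rw [hm]
    ring_nf
    simp [derivative_X_pow]
    rw [show (C (2:ℝ)) = 2 from map_ofNat C 2]
    ring

lemma GLuk_eval_one (N k : ℕ) (hk : k < N) : (GLuk N k).eval 1 = 0 := by
  obtain ⟨g, hg⟩ := GLuk_vanish N k hk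
  have h1 : N - k ≠ 0 := by omega
  simp [hg, h1, zero_pow]

lemma GLuk_eval_negone (N k : ℕ) (hk : k < N) : (GLuk N k).eval (-1) = 0 := by
  obtain ⟨g, hg⟩ := GLuk_vanish N k hk
  have h1 : N - k ≠ 0 := by omega
  simp [hg, h1, zero_pow]

lemma GLu_natDegree (N : ℕ) : (GLu N).natDegree = 2*N := by
  unfold GLu
  have h : ((X:Polynomial ℝ)^2 - 1).natDegree = 2 := by
    simpa using natDegree_X_pow_sub_C (n := 2) (r := (1:ℝ))
  have hm : ((X:Polynomial ℝ)^2 - 1).Monic := by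
    have := monic_X_pow_sub_C (1:ℝ) (two_ne_zero)
    simpa using this
  rw [hm.natDegree_pow, h]; ring

lemma GLu_monic (N : ℕ) : (GLu N).Monic := by
  unfold GLu
  have hm : ((X:Polynomial ℝ)^2 - 1).Monic := by
    have := monic_X_pow_sub_C (1:ℝ) (two_ne_zero)
    simpa using this
  exact hm.pow _

lemma GLuk_natDegree (N k : ℕ) : (GLuk N k).natDegree ≤ 2*N - k := by
  unfold GLuk
  have := Polynomial.natDegree_iterate_derivative (GLu N) k
  rwa [GLu_natDegree] at this

lemma GLR_coeff (N : ℕ) : (GLuk N N).coeff N = ((2*N).descFactorial N : ℝ) := by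
  unfold GLuk
  rw [Polynomial.coeff_iterate_derivative]
  have h2 : N + N = 2*N := by ring
  rw [h2]
  have : (GLu N).coeff (2*N) = 1 := by
    have := (GLu_monic N).leadingCoeff
    rwa [leadingCoeff, GLu_natDegree] at this
  rw [this]; simp

end

section
lemma GLode_base (N : ℕ) (hN : 1 ≤ N) :
    ((X:Polynomial ℝ)^2 - 1) * GLuk N 1 = (2*(N:Polynomial ℝ)) * X * GLuk N 0 := by
  have hm : N - 1 + 1 = N := by omega
  unfold GLuk GLu
  simp only [Function.iterate_one, Function.iterate_zero, id_eq]
  rw [derivative_pow]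
  have : derivative ((X:Polynomial ℝ)^2 - 1) = 2 * X := by
    norm_num
    simp only [derivative_add, derivative_mul, derivative_sub, derivative_one, derivative_X,
      derivative_X_pow, derivative_natCast, derivative_ofNat, Polynomial.C_eq_natCast,
      Nat.cast_ofNat, map_ofNat, pow_one, mul_zero, zero_mul, add_zero, zero_add, sub_zero, ← GLuk_succ]
  rw [this]
  calc ((X:Polynomial ℝ)^2 - 1) * (C (N:ℝ) * ((X:Polynomial ℝ)^2-1) ^ (N - 1) * (2*X))
      = C (N:ℝ) * ((X:Polynomial ℝ)^2-1) ^ (N - 1 + 1) * (2*X) := by ring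
    _ = (2*(N:Polynomial ℝ)) * X * ((X:Polynomial ℝ)^2-1)^N := by
        rw [hm, Polynomial.C_eq_natCast]; ring

lemma GLode_chain (N : ℕ) (hN : 1 ≤ N) : ∀ k : ℕ,
    ((X:Polynomial ℝ)^2 - 1) * GLuk N (k+2)
      + (2*((k:Polynomial ℝ)+1)) * X * GLuk N (k+1)
      + (((k:Polynomial ℝ)+1)*(k:Polynomial ℝ)) * GLuk N k
    = (2*(N:Polynomial ℝ)) * X * GLuk N (k+1)
      + (2*(N:Polynomial ℝ)*((k:Polynomial ℝ)+1)) * GLuk N k := by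
  intro k
  induction k with
  | zero =>
    have h' := congrArg derivative (GLode_base N hN)
    simp only [derivative_add, derivative_mul, derivative_sub, derivative_one, derivative_X,
      derivative_X_pow, derivative_natCast, derivative_ofNat, Polynomial.C_eq_natCast,
      Nat.cast_ofNat, map_ofNat, pow_one, mul_zero, zero_mul, add_zero, zero_add, sub_zero, ← GLuk_succ] at h'
    push_cast
    linear_combination h'
  | succ k ih =>
    have h' := congrArg derivative ih
    simp only [derivative_add, derivative_mul, derivative_sub, derivative_one, derivative_X,
      derivative_X_pow, derivative_natCast, derivative_ofNat, Polynomial.C_eq_natCast,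
      Nat.cast_ofNat, map_ofNat, pow_one, mul_zero, zero_mul, add_zero, zero_add, sub_zero, ← GLuk_succ] at h'
    push_cast at h' ⊢
    linear_combination h'

lemma GLode (N : ℕ) (hN : 1 ≤ N) :
    derivative (((X:Polynomial ℝ)^2 - 1) * GLuk N (N+1))
      = ((N:Polynomial ℝ)*((N:Polynomial ℝ)+1)) * GLuk N N := by
  have h := GLode_chain N hN N
  simp only [derivative_add, derivative_mul, derivative_sub, derivative_one, derivative_X,
      derivative_X_pow, derivative_natCast, derivative_ofNat, Polynomial.C_eq_natCast,
      Nat.cast_ofNat, map_ofNat, pow_one, mul_zero, zero_mul, add_zero, zero_add, sub_zero, ← GLuk_succ]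
  linear_combination h
end

section OneD
variable {N : ℕ} (hN : 1 ≤ N) (ξ ρ : Fin (N + 1) → ℝ)

noncomputable def GLQ (ξ ρ : Fin (N + 1) → ℝ) (φ : Polynomial ℝ) : ℝ :=
  ∑ i : Fin (N + 1), φ.eval (ξ i) * ρ i

lemma GLQ_sub (φ ψ : Polynomial ℝ) : GLQ ξ ρ (φ - ψ) = GLQ ξ ρ φ - GLQ ξ ρ ψ := by
  simp [GLQ, eval_sub, sub_mul, Finset.sum_sub_distrib]

def GLS (N : ℕ) : Finset (Fin (N + 1)) := Finset.univ \ {0, Fin.last N}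

lemma GLS_mem {j : Fin (N+1)} : j ∈ GLS N ↔ j ≠ 0 ∧ j ≠ Fin.last N := by
  simp [GLS]

lemma GLS_card (hN : 1 ≤ N) : (GLS N).card = N - 1 := by
  have h0 : (0 : Fin (N+1)) ≠ Fin.last N := by
    intro h
    have := congrArg Fin.val h
    simp [Fin.last] at this
    omega
  rw [GLS, Finset.card_sdiff_of_subset (by simp)]
  rw [Finset.card_insert_of_notMem (by simpa using h0)]
  simp

lemma GL_weight_nonneg (hN : 1 ≤ N) (hmono : StrictMono ξ) (hfirst : ξ 0 = -1)
    (hlast : ξ (Fin.last N) = 1)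
    (hquad : ∀ φ : Polynomial ℝ, φ.natDegree ≤ 2 * N - 1 →
      GLI φ = GLQ ξ ρ φ) : ∀ i, 0 ≤ ρ i := by
  classical
  intro i
  set T : Finset (Fin (N+1)) := GLS N \ {i} with hT
  set w2 : Polynomial ℝ := ∏ j ∈ T, (X - C (ξ j))^2 with hw2
  have hw2deg : w2.natDegree ≤ 2 * T.card := by
    refine le_trans (Polynomial.natDegree_prod_le _ _) ?_
    calc ∑ j ∈ T, ((X - C (ξ j))^2).natDegree ≤ ∑ _j ∈ T, 2 :=
          Finset.sum_le_sum (f := fun j => ((X - C (ξ j))^2).natDegree)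
            (g := fun _ => 2) (fun j _ => by rw [natDegree_pow, natDegree_X_sub_C])
      _ = 2 * T.card := by rw [Finset.sum_const, smul_eq_mul]; ring
  have hw2nonneg : ∀ x : ℝ, 0 ≤ w2.eval x := by
    intro x
    rw [hw2, eval_prod]
    exact Finset.prod_nonneg fun j _ => by simp [even_two.pow_nonneg]
  have hw2pos : 0 < w2.eval (ξ i) := by
    rw [hw2, eval_prod]
    refine Finset.prod_pos fun j hj => ?_
    have hji : j ≠ i := by rintro rfl; simp [hT] at hj
    have : ξ i - ξ j ≠ 0 := sub_ne_zero.mpr (fun h => hji (hmono.injective h).symm)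
    simpa using pow_pos (abs_pos.mpr this) 2 |>.trans_eq (by rw [sq_abs])
  have hw2vanish : ∀ j ∈ T, w2.eval (ξ j) = 0 := by
    intro j hj
    rw [hw2, eval_prod]
    exact Finset.prod_eq_zero hj (by simp)
  have hrange : ∀ j : Fin (N+1), -1 ≤ ξ j ∧ ξ j ≤ 1 := by
    intro j
    constructor
    · rw [← hfirst]; exact hmono.monotone (Fin.zero_le j)
    · rw [← hlast]; exact hmono.monotone (Fin.le_last j)
  have h0last : (0 : Fin (N+1)) ≠ Fin.last N := by
    intro h; have := congrArg Fin.val h; simp [Fin.last] at this; omega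
  obtain ⟨b, hbdeg, hbnn, hbvan, hbpos⟩ :
      ∃ b : Polynomial ℝ, b.natDegree + 2 * T.card ≤ 2*N - 1 ∧
        (∀ x ∈ Set.Icc (-1:ℝ) 1, 0 ≤ b.eval x) ∧
        (∀ j : Fin (N+1), j ≠ i → j ∉ T → b.eval (ξ j) = 0) ∧
        0 < b.eval (ξ i) := by
    rcases eq_or_ne i 0 with rfl | hi0
    · refine ⟨1 - X, ?_, ?_, ?_, ?_⟩
      · have hTc : T.card = N - 1 := by
          rw [hT, Finset.sdiff_singleton_eq_erase, Finset.erase_eq_of_notMem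
            (by simp [GLS_mem]), GLS_card hN]
        have : (1 - X : Polynomial ℝ).natDegree ≤ 1 := by
          refine le_trans (natDegree_sub_le _ _) (by simp)
        omega
      · intro x hx; simp; linarith [hx.2]
      · intro j hj hjT
        have : j = Fin.last N := by
          by_contra hjl
          exact hjT (by simp [hT, GLS_mem, hj, hjl])
        simp [this, hlast]
      · norm_num [hfirst]
    rcases eq_or_ne i (Fin.last N) with rfl | hil
    · refine ⟨1 + X, ?_, ?_, ?_, ?_⟩
      · have hTc : T.card = N - 1 := by
          rw [hT, Finset.sdiff_singleton_eq_erase, Finset.erase_eq_of_notMem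
            (by simp [GLS_mem]), GLS_card hN]
        have : (1 + X : Polynomial ℝ).natDegree ≤ 1 := by
          refine le_trans (natDegree_add_le _ _) (by simp)
        omega
      · intro x hx; simp; linarith [hx.1]
      · intro j hj hjT
        have : j = 0 := by
          by_contra hj0
          exact hjT (by simp [hT, GLS_mem, hj, hj0])
        simp [this, hfirst]
      · norm_num [hlast]
    · have hiS : i ∈ GLS N := GLS_mem.mpr ⟨hi0, hil⟩
      have hN2 : 2 ≤ N := by
        have h1 : (i : ℕ) ≠ 0 := fun h => hi0 (Fin.ext (by simpa using h))
        have h2 : (i : ℕ) ≠ N := fun h => hil (Fin.ext (by simpa [Fin.last] using h))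
        have := i.isLt
        omega
      refine ⟨(1 - X) * (1 + X), ?_, ?_, ?_, ?_⟩
      · have hTc : T.card = N - 2 := by
          rw [hT, Finset.sdiff_singleton_eq_erase, Finset.card_erase_of_mem hiS,
            GLS_card hN]
          omega
        have : ((1 - X) * (1 + X) : Polynomial ℝ).natDegree ≤ 2 := by
          refine le_trans (natDegree_mul_le) ?_
          have h1 : (1 - X : Polynomial ℝ).natDegree ≤ 1 :=
            le_trans (natDegree_sub_le _ _) (by simp)
          have h2 : (1 + X : Polynomial ℝ).natDegree ≤ 1 :=
            le_trans (natDegree_add_le _ _) (by simp)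
          omega
        omega
      · intro x hx; simp
        have := hx.1; have := hx.2; nlinarith
      · intro j hj hjT
        have : j = 0 ∨ j = Fin.last N := by
          by_contra hc
          push_neg at hc
          exact hjT (by simp [hT, GLS_mem, hj, hc.1, hc.2])
        rcases this with rfl | rfl <;> simp [hfirst, hlast]
      · have h1 : ξ 0 < ξ i := hmono (Fin.pos_of_ne_zero hi0)
        have h2 : ξ i < ξ (Fin.last N) := hmono (Fin.lt_last_iff_ne_last.mpr hil)
        rw [hfirst] at h1; rw [hlast] at h2
        simp; nlinarith
  set φ := b * w2 with hφ
  have hdeg : φ.natDegree ≤ 2*N - 1 := le_trans natDegree_mul_le (by omega)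
  have hsum : GLQ ξ ρ φ = φ.eval (ξ i) * ρ i := by
    rw [GLQ]
    refine Finset.sum_eq_single i ?_ (by simp)
    intro j _ hji
    have : φ.eval (ξ j) = 0 := by
      by_cases hjT : j ∈ T
      · simp [hφ, hw2vanish j hjT]
      · simp [hφ, hbvan j hji hjT]
    simp [this]
  have hInn : 0 ≤ GLI φ := by
    apply GLI_nonneg
    intro x hx
    simp only [hφ, eval_mul]
    exact mul_nonneg (hbnn x hx) (hw2nonneg x)
  rw [hquad φ hdeg, hsum] at hInn
  have hφpos : 0 < φ.eval (ξ i) := by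
    simp only [hφ, eval_mul]
    exact mul_pos hbpos hw2pos
  exact nonneg_of_mul_nonneg_right hInn hφpos

lemma GLI_zero : GLI 0 = 0 := by unfold GLI; simp

lemma GL_ortho_aux (N : ℕ) : ∀ j, j ≤ N → ∀ q : Polynomial ℝ,
    GLI (GLuk N N * q) = (-1:ℝ)^j * GLI (GLuk N (N-j) * derivative^[j] q) := by
  intro j
  induction j with
  | zero => intro _ q; simp
  | succ j ih =>
    intro hj q
    have hj' : j ≤ N := by omega
    rw [ih hj' q]
    have hidx : N - (j+1) + 1 = N - j := by omega
    have hbp := GLI_by_parts (GLuk N (N - (j+1))) (derivative^[j] q)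
    rw [← GLuk_succ, hidx] at hbp
    rw [GLuk_eval_one N _ (by omega), GLuk_eval_negone N _ (by omega)] at hbp
    rw [hbp, ← Function.iterate_succ_apply' derivative]
    ring

lemma GL_ortho (N : ℕ) (q : Polynomial ℝ) (hq : q.natDegree < N) :
    GLI (GLuk N N * q) = 0 := by
  have h := GL_ortho_aux N N le_rfl q
  rw [Polynomial.iterate_derivative_eq_zero hq, mul_zero, GLI_zero] at h
  simpa using h

lemma GL_energy (N : ℕ) (hN : 1 ≤ N) :
    GLI ((((1:Polynomial ℝ) - X^2) * GLuk N (N+1)) * GLuk N (N+1))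
      = (N:ℝ)*((N:ℝ)+1) * GLI (GLuk N N * GLuk N N) := by
  have hbp := GLI_by_parts (((X:Polynomial ℝ)^2 - 1) * GLuk N (N+1)) (GLuk N N)
  rw [GLode N hN] at hbp
  have he1 : ((((X:Polynomial ℝ)^2 - 1) * GLuk N (N+1))).eval 1 = 0 := by simp
  have he2 : ((((X:Polynomial ℝ)^2 - 1) * GLuk N (N+1))).eval (-1) = 0 := by simp
  rw [he1, he2, ← GLuk_succ] at hbp
  have hC : ((N:Polynomial ℝ)*((N:Polynomial ℝ)+1)) = C ((N:ℝ)*((N:ℝ)+1)) := by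
    rw [map_mul, map_add, map_one, Polynomial.C_eq_natCast]
  have hL : ((N:Polynomial ℝ)*((N:Polynomial ℝ)+1)) * GLuk N N * GLuk N N
      = C ((N:ℝ)*((N:ℝ)+1)) * (GLuk N N * GLuk N N) := by rw [hC]; ring
  rw [hL, GLI_smul] at hbp
  have hR : (((1:Polynomial ℝ) - X^2) * GLuk N (N+1)) * GLuk N (N+1)
      = 0 - (((X:Polynomial ℝ)^2 - 1) * GLuk N (N+1) * GLuk N (N+1)) := by ring
  rw [hR, GLI_sub, GLI_zero]
  linarith

lemma GLQ_smul (c : ℝ) (φ : Polynomial ℝ) : GLQ ξ ρ (C c * φ) = c * GLQ ξ ρ φ := by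
  simp [GLQ, eval_mul, eval_C, Finset.mul_sum, mul_assoc]

set_option maxHeartbeats 1000000 in
lemma GL_oneD (hN : 1 ≤ N) (hmono : StrictMono ξ) (hfirst : ξ 0 = -1)
    (hlast : ξ (Fin.last N) = 1)
    (hquad : ∀ φ : Polynomial ℝ, φ.natDegree ≤ 2 * N - 1 → GLI φ = GLQ ξ ρ φ) :
    ∀ P : Polynomial ℝ, P.natDegree ≤ N →
      GLI (P*P) ≤ GLQ ξ ρ (P*P) ∧ GLQ ξ ρ (P*P) ≤ 3 * GLI (P*P) := by
  classical
  have hm2 : ((X:Polynomial ℝ)^2 - 1).Monic := by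
    simpa using (monic_X_pow_sub_C (1:ℝ) two_ne_zero)
  have hd2 : ((X:Polynomial ℝ)^2 - 1).natDegree = 2 := by
    simpa using natDegree_X_pow_sub_C (n := 2) (r := (1:ℝ))
  set w : Polynomial ℝ := ∏ j ∈ GLS N, (X - C (ξ j)) with hw
  have hwmonic : w.Monic := monic_prod_of_monic _ _ (fun j _ => monic_X_sub_C _)
  have hwdeg : w.natDegree = N - 1 := by
    rw [hw, natDegree_prod_of_monic _ _ (fun j _ => monic_X_sub_C _)]
    simp [natDegree_X_sub_C, GLS_card hN]
  -- the "error constant"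
  set E : ℝ := GLQ ξ ρ (X^(2*N)) - GLI (X^(2*N)) with hE
  -- E = ∫ (1-x²) w²
  have hprodmonic : (((X:Polynomial ℝ)^2 - 1) * (w*w)).Monic := hm2.mul (hwmonic.mul hwmonic)
  have hproddeg : (((X:Polynomial ℝ)^2 - 1) * (w*w)).natDegree = 2*N := by
    rw [hm2.natDegree_mul (hwmonic.mul hwmonic), hd2, hwmonic.natDegree_mul hwmonic, hwdeg]
    omega
  have hφEdeg : ((X:Polynomial ℝ)^(2*N) - ((X:Polynomial ℝ)^2 - 1) * (w*w)).natDegree ≤ 2*N - 1 := by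
    rw [Polynomial.natDegree_le_iff_coeff_eq_zero]
    intro m hm
    rcases eq_or_lt_of_le (show 2*N ≤ m by omega) with rfl | hlt
    · rw [coeff_sub, coeff_X_pow, if_pos rfl]
      have := hprodmonic.coeff_natDegree
      rw [hproddeg] at this
      rw [this]; ring
    · rw [coeff_sub, coeff_X_pow, if_neg (by omega),
        coeff_eq_zero_of_natDegree_lt (by rw [hproddeg]; omega)]
      ring
  have hQprod : GLQ ξ ρ (((X:Polynomial ℝ)^2 - 1) * (w*w)) = 0 := by
    rw [GLQ]
    refine Finset.sum_eq_zero fun j _ => ?_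
    by_cases hj : j ∈ GLS N
    · have : w.eval (ξ j) = 0 := by
        rw [hw, eval_prod]
        exact Finset.prod_eq_zero hj (by simp)
      simp [this]
    · have : ξ j = -1 ∨ ξ j = 1 := by
        rw [GLS_mem] at hj
        push_neg at hj
        by_cases h0 : j = 0
        · left; rw [h0, hfirst]
        · right; rw [hj h0, hlast]
      rcases this with h | h <;> simp [h]
  have hEeq : E = GLI (((1:Polynomial ℝ) - X^2) * (w*w)) := by
    have hq := hquad _ hφEdeg
    rw [GLI_sub, GLQ_sub, hQprod] at hq
    have hiden : ((1:Polynomial ℝ) - X^2) * (w*w)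
        = (0:Polynomial ℝ) - (((X:Polynomial ℝ)^2 - 1) * (w*w)) := by ring
    rw [hE, hiden, GLI_sub, GLI_zero]
    linarith
  have hEnn : 0 ≤ E := by
    rw [hEeq]
    apply GLI_nonneg
    intro x hx
    simp only [eval_mul, eval_sub, eval_one, eval_pow, eval_X]
    have h1 : 0 ≤ 1 - x^2 := by nlinarith [hx.1, hx.2]
    exact mul_nonneg h1 (mul_self_nonneg _)
  -- the error identity
  have herr : ∀ P : Polynomial ℝ, P.natDegree ≤ N →
      GLQ ξ ρ (P*P) - GLI (P*P) = (P.coeff N)^2 * E := by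
    intro P hP
    set c : ℝ := P.coeff N with hc
    have hfac : P*P - C (c^2) * X^(2*N)
        = (P - C c * X^N) * (P + C c * X^N) := by
      have h1 : (X:Polynomial ℝ)^(2*N) = X^N * X^N := by rw [← pow_add]; ring_nf
      have h2 : (C (c^2) : Polynomial ℝ) = C c * C c := by rw [← map_mul]; ring_nf
      rw [h1, h2]; ring
    have hdeg1 : (P - C c * X^N).natDegree ≤ N - 1 := by
      rw [Polynomial.natDegree_le_iff_coeff_eq_zero]
      intro m hm
      have hNm : N ≤ m := by omega
      rcases eq_or_lt_of_le hNm with rfl | hlt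
      · rw [coeff_sub, coeff_C_mul, coeff_X_pow, if_pos rfl, mul_one, hc]; ring
      · rw [coeff_sub, coeff_C_mul, coeff_X_pow, if_neg (by omega),
          coeff_eq_zero_of_natDegree_lt (lt_of_le_of_lt hP hlt)]
        ring
    have hdeg2 : (P + C c * X^N).natDegree ≤ N := by
      refine le_trans (natDegree_add_le _ _) ?_
      simp only [max_le_iff]
      refine ⟨hP, le_trans (natDegree_C_mul_le _ _) (by simp)⟩
    have hdegfac : (P*P - C (c^2) * X^(2*N)).natDegree ≤ 2*N - 1 := by
      rw [hfac]
      refine le_trans natDegree_mul_le ?_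
      omega
    have hq := hquad _ hdegfac
    rw [GLI_sub, GLQ_sub, GLI_smul, GLQ_smul] at hq
    rw [hE]
    nlinarith [hq]
  -- Legendre estimates
  set R : Polynomial ℝ := GLuk N N with hR
  set R1 : Polynomial ℝ := GLuk N (N+1) with hR1
  set l : ℝ := ((2*N).descFactorial N : ℝ) with hl
  have hlpos : 0 < l := by
    rw [hl]
    have : (2*N).descFactorial N ≠ 0 := by
      rw [Ne, Nat.descFactorial_eq_zero_iff_lt]
      omega
    exact_mod_cast Nat.pos_of_ne_zero this
  have hRdeg : R.natDegree ≤ N := by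
    have h := GLuk_natDegree N N
    rw [← hR] at h
    omega
  have hR1deg : R1.natDegree ≤ N - 1 := by
    have h := GLuk_natDegree N (N+1)
    rw [← hR1] at h
    omega
  have hRcoeff : R.coeff N = l := GLR_coeff N
  have hR1coeff : R1.coeff (N-1) = l * N := by
    have hsucc : N - 1 + 1 = N := by omega
    rw [hR1, show N + 1 = (N) + 1 from rfl, GLuk_succ, coeff_derivative, ← hR]
    rw [hsucc, hRcoeff]
    have : ((N - 1 : ℕ) : ℝ) = (N:ℝ) - 1 := by
      rw [Nat.cast_sub hN]; norm_num
    rw [this]; ring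
  -- v = (1/(N l)) R1 ; d = w - v has degree ≤ N-2
  set v : Polynomial ℝ := C (1/((N:ℝ)*l)) * R1 with hv
  have hNl : (N:ℝ)*l ≠ 0 := by
    have : (0:ℝ) < N := by exact_mod_cast hN
    positivity
  have hdcoeff : ∀ m, N - 1 ≤ m → (w - v).coeff m = 0 := by
      intro m hN1m
      rcases eq_or_lt_of_le hN1m with heq | hlt
      · rw [coeff_sub, hv, coeff_C_mul, ← heq, hR1coeff]
        have hwlead : w.coeff (N-1) = 1 := by
          have := hwmonic.coeff_natDegree
          rwa [hwdeg] at this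
        rw [hwlead]
        field_simp
        ring
      · rw [coeff_sub, hv, coeff_C_mul,
          coeff_eq_zero_of_natDegree_lt (lt_of_le_of_lt hwdeg.le hlt),
          coeff_eq_zero_of_natDegree_lt (lt_of_le_of_lt hR1deg hlt)]
        ring
  have hdcase : (w - v) = 0 ∨ (2 ≤ N ∧ (w - v).natDegree ≤ N - 2) := by
    rcases eq_or_lt_of_le hN with h1 | h2
    · left
      apply Polynomial.ext
      intro m
      simpa using hdcoeff m (by omega)
    · right
      exact ⟨by omega, Polynomial.natDegree_le_iff_coeff_eq_zero.mpr
        (fun m hm => hdcoeff m (by omega))⟩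
  have hd12 : ((1:Polynomial ℝ) - X^2).natDegree ≤ 2 := by
    refine le_trans (natDegree_sub_le _ _) ?_
    simp
  -- orthogonality of w against w - v
  have hOw : GLI (((1:Polynomial ℝ) - X^2) * (w * (w - v))) = 0 := by
    rcases hdcase with h0 | ⟨hN2, hdeg⟩
    · rw [h0, mul_zero, mul_zero, GLI_zero]
    · have hdegψ : (((1:Polynomial ℝ) - X^2) * (w * (w - v))).natDegree ≤ 2*N - 1 := by
        refine le_trans natDegree_mul_le ?_
        have h2 : (w * (w - v)).natDegree ≤ (N-1) + (N-2) :=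
          le_trans natDegree_mul_le (by omega)
        omega
      rw [hquad _ hdegψ, GLQ]
      refine Finset.sum_eq_zero fun j _ => ?_
      by_cases hj : j ∈ GLS N
      · have : w.eval (ξ j) = 0 := by
          rw [hw, eval_prod]
          exact Finset.prod_eq_zero hj (by simp)
        simp [this]
      · have : ξ j = -1 ∨ ξ j = 1 := by
          rw [GLS_mem] at hj
          push_neg at hj
          by_cases h0 : j = 0
          · left; rw [h0, hfirst]
          · right; rw [hj h0, hlast]
        rcases this with h | h <;> simp [h]
  -- orthogonality of R1 against w - v
  have hR1d : R1 = derivative R := by rw [hR1, hR, GLuk_succ]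
  have hOv : GLI (((1:Polynomial ℝ) - X^2) * (R1 * (w - v))) = 0 := by
    rcases hdcase with h0 | ⟨hN2, hdeg⟩
    · rw [h0, mul_zero, mul_zero, GLI_zero]
    · have hiden : ((1:Polynomial ℝ) - X^2) * (R1 * (w - v))
          = derivative R * (((1:Polynomial ℝ) - X^2) * (w - v)) := by
        rw [← hR1d]; ring
      rw [hiden]
      have hbp := GLI_by_parts R (((1:Polynomial ℝ) - X^2) * (w - v))
      have he1 : (((1:Polynomial ℝ) - X^2) * (w - v)).eval 1 = 0 := by simp
      have he2 : (((1:Polynomial ℝ) - X^2) * (w - v)).eval (-1) = 0 := by simp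
      rw [he1, he2] at hbp
      have hortho : GLI (R * derivative (((1:Polynomial ℝ) - X^2) * (w - v))) = 0 := by
        rw [hR]
        apply GL_ortho
        refine lt_of_le_of_lt (natDegree_derivative_le _) ?_
        have : (((1:Polynomial ℝ) - X^2) * (w - v)).natDegree ≤ 2 + (N-2) :=
          le_trans natDegree_mul_le (by omega)
        omega
      rw [hortho] at hbp
      rw [hbp]
      ring
  -- E in terms of R
  have hE3 : E = (1/((N:ℝ)*l))^2 * ((N:ℝ)*((N:ℝ)+1)) * GLI (R * R) := by
    have hsplit : ((1:Polynomial ℝ) - X^2) * (w*w)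
        = ((1:Polynomial ℝ) - X^2) * (v*v)
          + (((1:Polynomial ℝ) - X^2) * (w * (w - v))
             + ((1:Polynomial ℝ) - X^2) * (v * (w - v))) := by ring
    have hOv' : GLI (((1:Polynomial ℝ) - X^2) * (v * (w - v))) = 0 := by
      have : ((1:Polynomial ℝ) - X^2) * (v * (w - v))
          = C (1/((N:ℝ)*l)) * (((1:Polynomial ℝ) - X^2) * (R1 * (w - v))) := by
        rw [hv]; ring
      rw [this, GLI_smul, hOv, mul_zero]
    have hvv : GLI (((1:Polynomial ℝ) - X^2) * (v*v))
        = (1/((N:ℝ)*l))^2 * GLI (((1:Polynomial ℝ) - X^2) * (R1*R1)) := by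
      have hCsq : (C ((1/((N:ℝ)*l))^2) : Polynomial ℝ)
          = C (1/((N:ℝ)*l)) * C (1/((N:ℝ)*l)) := by rw [← map_mul]; ring_nf
      have : ((1:Polynomial ℝ) - X^2) * (v*v)
          = C ((1/((N:ℝ)*l))^2) * (((1:Polynomial ℝ) - X^2) * (R1*R1)) := by
        rw [hCsq, hv]; ring
      rw [this, GLI_smul]
    have henergy : GLI (((1:Polynomial ℝ) - X^2) * (R1*R1))
        = (N:ℝ)*((N:ℝ)+1) * GLI (R * R) := by
      have := GL_energy N hN
      rw [← hR1, ← hR] at this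
      rw [← this]
      congr 1
      ring
    rw [hEeq, hsplit, GLI_add, GLI_add, hOw, hOv', hvv, henergy]
    ring
  -- lower bound for the L² norm via the leading coefficient
  have hmu : ∀ P : Polynomial ℝ, P.natDegree ≤ N →
      (P.coeff N / l)^2 * GLI (R*R) ≤ GLI (P*P) := by
    intro P hP
    set a : ℝ := P.coeff N / l with ha
    set r : Polynomial ℝ := P - C a * R with hr
    have hPsplit : P = C a * R + r := by rw [hr]; ring
    have hrdeg : r.natDegree < N := by
      have : r.natDegree ≤ N - 1 := by
        rw [Polynomial.natDegree_le_iff_coeff_eq_zero]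
        intro m hm
        have hNm : N ≤ m := by omega
        rcases eq_or_lt_of_le hNm with rfl | hlt
        · rw [hr, coeff_sub, coeff_C_mul, hRcoeff, ha]
          field_simp
          ring
        · rw [hr, coeff_sub, coeff_C_mul,
            coeff_eq_zero_of_natDegree_lt (lt_of_le_of_lt hP hlt),
            coeff_eq_zero_of_natDegree_lt (lt_of_le_of_lt hRdeg hlt)]
          ring
      omega
    have hortho : GLI (R * r) = 0 := by
      rw [hR]; exact GL_ortho N r hrdeg
    have hexp : (C a * R + r) * (C a * R + r)
        = C (a^2) * (R*R) + (C (2*a) * (R*r) + r*r) := by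
      have h1 : (C (a^2) : Polynomial ℝ) = C a * C a := by rw [← map_mul]; ring_nf
      have h2 : (C (2*a) : Polynomial ℝ) = 2 * C a := by
        rw [show ((2:Polynomial ℝ)) = C 2 from (map_ofNat C 2).symm, ← map_mul]
      rw [h1, h2]; ring
    calc a^2 * GLI (R*R) ≤ a^2 * GLI (R*R) + GLI (r*r) := by
          linarith [GLI_sq_nonneg r]
      _ = GLI (P*P) := by
          rw [hPsplit, hexp, GLI_add, GLI_add, GLI_smul, GLI_smul, hortho]
          ring
  -- conclusion
  intro P hP
  have herrP := herr P hP
  constructor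
  · nlinarith [sq_nonneg (P.coeff N), hEnn, herrP]
  · have hNpos : (0:ℝ) < N := by exact_mod_cast hN
    have hN1 : (1:ℝ) ≤ N := by exact_mod_cast hN
    have hmuP := hmu P hP
    have hRRnn := GLI_sq_nonneg R
    have hkey : (P.coeff N)^2 * E ≤ 2 * GLI (P*P) := by
      rw [hE3]
      have hfact : (P.coeff N)^2 * ((1/((N:ℝ)*l))^2 * ((N:ℝ)*((N:ℝ)+1)) * GLI (R*R))
          = (((N:ℝ)+1)/(N:ℝ)) * ((P.coeff N / l)^2 * GLI (R*R)) := by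
        field_simp
      rw [hfact]
      have hratio : ((N:ℝ)+1)/(N:ℝ) ≤ 2 := by
        rw [div_le_iff₀ hNpos]
        linarith
      calc (((N:ℝ)+1)/(N:ℝ)) * ((P.coeff N / l)^2 * GLI (R*R))
          ≤ 2 * ((P.coeff N / l)^2 * GLI (R*R)) := by
            exact mul_le_mul_of_nonneg_right hratio
              (mul_nonneg (sq_nonneg _) hRRnn)
        _ ≤ 2 * GLI (P*P) := by linarith
    linarith

end OneD

theorem stmt_10 (N : ℕ) (hN : 1 ≤ N)
    (ξ ρ : Fin (N + 1) → ℝ)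
    (hmono : StrictMono ξ) (hfirst : ξ 0 = -1) (hlast : ξ (Fin.last N) = 1)
    (hquad : ∀ φ : Polynomial ℝ, φ.natDegree ≤ 2 * N - 1 →
      ∫ ζ in (-1 : ℝ)..1, φ.eval ζ = ∑ i : Fin (N + 1), φ.eval (ξ i) * ρ i) :
    ∀ p : MvPolynomial (Fin 2) ℝ, (∀ k : Fin 2, p.degreeOf k ≤ N) →
      (∫ x in (-1 : ℝ)..1, ∫ y in (-1 : ℝ)..1, (MvPolynomial.eval ![x, y] p) ^ 2) ≤
        (∑ i : Fin (N + 1), ∑ j : Fin (N + 1),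
          (MvPolynomial.eval ![ξ i, ξ j] p) ^ 2 * (ρ i * ρ j)) ∧
      (∑ i : Fin (N + 1), ∑ j : Fin (N + 1),
          (MvPolynomial.eval ![ξ i, ξ j] p) ^ 2 * (ρ i * ρ j)) ≤
        9 * ∫ x in (-1 : ℝ)..1, ∫ y in (-1 : ℝ)..1, (MvPolynomial.eval ![x, y] p) ^ 2 := by
  classical
  have hquad' : ∀ φ : Polynomial ℝ, φ.natDegree ≤ 2 * N - 1 → GLI φ = GLQ ξ ρ φ :=
    fun φ h => hquad φ h
  have hρ : ∀ i, 0 ≤ ρ i := GL_weight_nonneg ξ ρ hN hmono hfirst hlast hquad'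
  have h1D := GL_oneD ξ ρ hN hmono hfirst hlast hquad'
  intro p hdeg
  set F : ℝ → ℝ → ℝ := fun x y => MvPolynomial.eval ![x, y] p with hF
  -- F as a finite sum of monomials, joint continuity
  have hFeq : ∀ x y : ℝ, F x y
      = ∑ m ∈ p.support, MvPolynomial.coeff m p * (x ^ m 0 * y ^ m 1) := by
    intro x y
    show MvPolynomial.eval ![x,y] p = _
    rw [MvPolynomial.eval_eq']
    refine Finset.sum_congr rfl fun m _ => ?_
    rw [Fin.prod_univ_two]
    simp
  have hFcont : Continuous (Function.uncurry fun x y => (F x y)^2) := by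
    have : Continuous (Function.uncurry F) := by
      have : (Function.uncurry F) = fun z : ℝ × ℝ =>
          ∑ m ∈ p.support, MvPolynomial.coeff m p * (z.1 ^ m 0 * z.2 ^ m 1) := by
        funext z
        exact hFeq z.1 z.2
      rw [this]
      continuity
    exact (this.pow 2)
  -- polynomial slices
  set A : ℝ → Polynomial ℝ := fun x =>
    ∑ m ∈ p.support, C (MvPolynomial.coeff m p * x ^ m 0) * X ^ m 1 with hA
  set B : ℝ → Polynomial ℝ := fun y =>
    ∑ m ∈ p.support, C (MvPolynomial.coeff m p * y ^ m 1) * X ^ m 0 with hB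
  have hAeval : ∀ x y : ℝ, (A x).eval y = F x y := by
    intro x y
    rw [hA, hFeq x y]
    simp only [eval_finset_sum, eval_mul, eval_C, eval_pow, eval_X]
    exact Finset.sum_congr rfl fun m _ => by ring
  have hBeval : ∀ x y : ℝ, (B y).eval x = F x y := by
    intro x y
    rw [hB, hFeq x y]
    simp only [eval_finset_sum, eval_mul, eval_C, eval_pow, eval_X]
    exact Finset.sum_congr rfl fun m _ => by ring
  have hAdeg : ∀ x, (A x).natDegree ≤ N := by
    intro x
    rw [hA]
    refine le_trans (Polynomial.natDegree_sum_le _ _) ?_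
    rw [Finset.fold_max_le]
    refine ⟨Nat.zero_le _, fun m hm => ?_⟩
    refine le_trans (natDegree_C_mul_le _ _) ?_
    rw [natDegree_X_pow]
    exact le_trans (MvPolynomial.monomial_le_degreeOf 1 hm) (hdeg 1)
  have hBdeg : ∀ y, (B y).natDegree ≤ N := by
    intro y
    rw [hB]
    refine le_trans (Polynomial.natDegree_sum_le _ _) ?_
    rw [Finset.fold_max_le]
    refine ⟨Nat.zero_le _, fun m hm => ?_⟩
    refine le_trans (natDegree_C_mul_le _ _) ?_
    rw [natDegree_X_pow]
    exact le_trans (MvPolynomial.monomial_le_degreeOf 0 hm) (hdeg 0)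
  -- inner integral identities
  have hinnerA : ∀ x : ℝ, (∫ y in (-1:ℝ)..1, (F x y)^2) = GLI (A x * A x) := by
    intro x
    unfold GLI
    refine intervalIntegral.integral_congr fun y _ => ?_
    rw [eval_mul, hAeval x y]
    ring
  have houterB : ∀ y0 : ℝ, (∫ x in (-1:ℝ)..1, (F x y0)^2) = GLI (B y0 * B y0) := by
    intro y0
    unfold GLI
    refine intervalIntegral.integral_congr fun x _ => ?_
    rw [eval_mul, hBeval x y0]
    ring
  have hGLQA : ∀ x : ℝ, GLQ ξ ρ (A x * A x) = ∑ j, (F x (ξ j))^2 * ρ j := by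
    intro x
    rw [GLQ]
    refine Finset.sum_congr rfl fun j _ => ?_
    rw [eval_mul, hAeval x (ξ j)]
    ring_nf
  have hGLQB : ∀ y0 : ℝ, GLQ ξ ρ (B y0 * B y0) = ∑ i, (F (ξ i) y0)^2 * ρ i := by
    intro y0
    rw [GLQ]
    refine Finset.sum_congr rfl fun i _ => ?_
    rw [eval_mul, hBeval (ξ i) y0]
    ring_nf
  -- continuity and integrability of the two x-functions
  have hfc : Continuous (fun x => ∫ y in (-1:ℝ)..1, (F x y)^2) :=
    intervalIntegral.continuous_parametric_intervalIntegral_of_continuous' hFcont (-1) 1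
  have hgc : Continuous (fun x => ∑ j, (F x (ξ j))^2 * ρ j) := by
    refine continuous_finset_sum _ fun j _ => ?_
    have : (fun x => (F x (ξ j))^2 * ρ j) = fun x => ((B (ξ j)).eval x)^2 * ρ j := by
      funext x; rw [hBeval x (ξ j)]
    rw [this]
    exact (((B (ξ j)).continuous_aeval).pow 2).mul continuous_const
  -- pointwise 1-D bounds in y
  have hylow : ∀ x : ℝ, (∫ y in (-1:ℝ)..1, (F x y)^2) ≤ ∑ j, (F x (ξ j))^2 * ρ j := by
    intro x
    rw [hinnerA x, ← hGLQA x]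
    exact (h1D (A x) (hAdeg x)).1
  have hyhigh : ∀ x : ℝ, (∑ j, (F x (ξ j))^2 * ρ j) ≤ 3 * ∫ y in (-1:ℝ)..1, (F x y)^2 := by
    intro x
    rw [hinnerA x, ← hGLQA x]
    exact (h1D (A x) (hAdeg x)).2
  -- 1-D bounds in x for fixed node y
  have hxlow : ∀ j, (∫ x in (-1:ℝ)..1, (F x (ξ j))^2) ≤ ∑ i, (F (ξ i) (ξ j))^2 * ρ i := by
    intro j
    rw [houterB (ξ j), ← hGLQB (ξ j)]
    exact (h1D (B (ξ j)) (hBdeg (ξ j))).1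
  have hxhigh : ∀ j, (∑ i, (F (ξ i) (ξ j))^2 * ρ i) ≤ 3 * ∫ x in (-1:ℝ)..1, (F x (ξ j))^2 := by
    intro j
    rw [houterB (ξ j), ← hGLQB (ξ j)]
    exact (h1D (B (ξ j)) (hBdeg (ξ j))).2
  -- exchange sum and integral
  have hexch : (∫ x in (-1:ℝ)..1, ∑ j, (F x (ξ j))^2 * ρ j)
      = ∑ j, (∫ x in (-1:ℝ)..1, (F x (ξ j))^2) * ρ j := by
    rw [intervalIntegral.integral_finset_sum]
    · refine Finset.sum_congr rfl fun j _ => ?_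
      exact intervalIntegral.integral_mul_const _ _
    · intro j _
      have : (fun x => (F x (ξ j))^2 * ρ j) = fun x => ((B (ξ j)).eval x)^2 * ρ j := by
        funext x; rw [hBeval x (ξ j)]
      rw [this]
      exact ((((B (ξ j)).continuous_aeval).pow 2).mul continuous_const).intervalIntegrable _ _
  constructor
  · calc (∫ x in (-1:ℝ)..1, ∫ y in (-1:ℝ)..1, (F x y)^2)
        ≤ ∫ x in (-1:ℝ)..1, ∑ j, (F x (ξ j))^2 * ρ j := by
          refine intervalIntegral.integral_mono_on (by norm_num)
            (hfc.intervalIntegrable _ _) (hgc.intervalIntegrable _ _) ?_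
          intro x _
          exact hylow x
      _ = ∑ j, (∫ x in (-1:ℝ)..1, (F x (ξ j))^2) * ρ j := hexch
      _ ≤ ∑ j, (∑ i, (F (ξ i) (ξ j))^2 * ρ i) * ρ j := by
          refine Finset.sum_le_sum fun j _ => ?_
          exact mul_le_mul_of_nonneg_right (hxlow j) (hρ j)
      _ = ∑ i, ∑ j, (F (ξ i) (ξ j))^2 * (ρ i * ρ j) := by
          rw [Finset.sum_comm]
          refine Finset.sum_congr rfl fun i _ => ?_
          rw [Finset.sum_mul]
          refine Finset.sum_congr rfl fun j _ => ?_
          ring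
  · calc (∑ i, ∑ j, (F (ξ i) (ξ j))^2 * (ρ i * ρ j))
        = ∑ j, (∑ i, (F (ξ i) (ξ j))^2 * ρ i) * ρ j := by
          rw [Finset.sum_comm]
          refine Finset.sum_congr rfl fun j _ => ?_
          rw [Finset.sum_mul]
          refine Finset.sum_congr rfl fun i _ => ?_
          ring
      _ ≤ ∑ j, (3 * ∫ x in (-1:ℝ)..1, (F x (ξ j))^2) * ρ j := by
          refine Finset.sum_le_sum fun j _ => ?_
          exact mul_le_mul_of_nonneg_right (hxhigh j) (hρ j)
      _ = 3 * ∑ j, (∫ x in (-1:ℝ)..1, (F x (ξ j))^2) * ρ j := by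
          rw [Finset.mul_sum]
          refine Finset.sum_congr rfl fun j _ => ?_
          ring
      _ = 3 * ∫ x in (-1:ℝ)..1, ∑ j, (F x (ξ j))^2 * ρ j := by rw [hexch]
      _ ≤ 3 * ∫ x in (-1:ℝ)..1, 3 * ∫ y in (-1:ℝ)..1, (F x y)^2 := by
          have hmono' := intervalIntegral.integral_mono_on (μ := MeasureTheory.volume)
            (a := (-1:ℝ)) (b := 1) (by norm_num)
            (hgc.intervalIntegrable _ _) ((hfc.const_smul (3:ℝ)).intervalIntegrable _ _)
            (fun x _ => by simpa using hyhigh x)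
          have h4 : (∫ x in (-1:ℝ)..1, 3 * ∫ y in (-1:ℝ)..1, (F x y)^2)
              = ∫ x in (-1:ℝ)..1, (3:ℝ) • ∫ y in (-1:ℝ)..1, (F x y)^2 := by
            refine intervalIntegral.integral_congr fun x _ => ?_
            simp [smul_eq_mul]
          rw [h4]
          simp only [Pi.smul_apply] at hmono'
          linarith [hmono']
      _ = 9 * ∫ x in (-1:ℝ)..1, ∫ y in (-1:ℝ)..1, (F x y)^2 := by
          rw [intervalIntegral.integral_const_mul]
          ring
end

section
/- Let H be a real Hilbert space, α > 0, γ > 0, M ≥ 1, let τ₁, …, τ_M be positive reals, let u⁰ ∈ H and f¹, …, f^M ∈ H, and define u^m for 1 ≤ m ≤ M by (u^m − u^{m−1})/τ_m + α u^m = γ f^m, i.e. u^m = (1 + α τ_m)^{-1} (u^{m−1} + τ_m γ f^m). Then for every m with 1 ≤ m ≤ M, ‖u^m‖² + α Σ_{j=1}^{m} τ_j ‖u^j‖² ≤ ‖u⁰‖² + (γ²/α) Σ_{j=1}^{m} τ_j ‖f^j‖². -/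
open RealInnerProductSpace

lemma step_12 {H : Type*} [NormedAddCommGroup H] [InnerProductSpace ℝ H]
    (α γ t : ℝ) (hα : 0 < α) (hγ : 0 < γ) (ht : 0 < t) (a b g : H)
    (h : b = (1 + α * t)⁻¹ • (a + (t * γ) • g)) :
    ‖b‖ ^ 2 + α * (t * ‖b‖ ^ 2) ≤ ‖a‖ ^ 2 + (γ ^ 2 / α) * (t * ‖g‖ ^ 2) := by
  have hne : (1 + α * t) ≠ 0 := by positivity
  have heq : (1 + α * t) • b = a + (t * γ) • g := by
    rw [h, smul_smul, mul_inv_cancel₀ hne, one_smul]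
  have hdiff : b - a = (t * γ) • g - (α * t) • b := by
    have h1 : b + (α * t) • b = a + (t * γ) • g := by
      rw [← heq, add_smul, one_smul]
    have h2 : b - a = (a + (t * γ) • g) - a - (α * t) • b := by
      rw [← h1]; abel
    rw [h2]; abel
  have hid : 2 * ⟪b - a, b⟫ = ‖b‖ ^ 2 - ‖a‖ ^ 2 + ‖b - a‖ ^ 2 := by
    have h1 : ‖b - a‖ ^ 2 = ‖b‖ ^ 2 - 2 * ⟪b, a⟫ + ‖a‖ ^ 2 := by
      rw [← real_inner_self_eq_norm_sq, ← real_inner_self_eq_norm_sq,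
        ← real_inner_self_eq_norm_sq, inner_sub_sub_self, real_inner_comm a b]
      ring
    have h2 : ⟪b - a, b⟫ = ‖b‖ ^ 2 - ⟪b, a⟫ := by
      rw [inner_sub_left, ← real_inner_self_eq_norm_sq, real_inner_comm a b]
    rw [h1, h2]; ring
  have hlow : ‖b‖ ^ 2 - ‖a‖ ^ 2 ≤ 2 * ⟪b - a, b⟫ := by
    nlinarith [sq_nonneg ‖b - a‖]
  have hin : ⟪b - a, b⟫ = t * γ * ⟪g, b⟫ - α * t * ‖b‖ ^ 2 := by
    rw [hdiff, inner_sub_left, real_inner_smul_left, real_inner_smul_left,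
      real_inner_self_eq_norm_sq]
  have hyoung : 2 * (γ * ⟪g, b⟫) ≤ (γ ^ 2 / α) * ‖g‖ ^ 2 + α * ‖b‖ ^ 2 := by
    have hcs : ⟪g, b⟫ ≤ ‖g‖ * ‖b‖ := real_inner_le_norm g b
    have key : 2 * α * (γ * ⟪g, b⟫) ≤ γ ^ 2 * ‖g‖ ^ 2 + α ^ 2 * ‖b‖ ^ 2 := by
      nlinarith [sq_nonneg (γ * ‖g‖ - α * ‖b‖), mul_le_mul_of_nonneg_left hcs
        (by positivity : (0:ℝ) ≤ 2 * α * γ)]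
    have hc : (γ ^ 2 / α) * α = γ ^ 2 := div_mul_cancel₀ _ hα.ne'
    nlinarith [key, hc, hα, sq_nonneg ‖g‖]
  nlinarith [mul_le_mul_of_nonneg_left hyoung ht.le, hlow, hin]

theorem stmt_12 {H : Type*} [NormedAddCommGroup H] [InnerProductSpace ℝ H]
    (α γ : ℝ) (hα : 0 < α) (hγ : 0 < γ)
    (M : ℕ) (hM : 1 ≤ M)
    (τ : ℕ → ℝ) (hτ : ∀ m, 1 ≤ m → m ≤ M → 0 < τ m)
    (u f : ℕ → H)
    (hrec : ∀ m, 1 ≤ m → m ≤ M →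
      u m = (1 + α * τ m)⁻¹ • (u (m - 1) + (τ m * γ) • f m)) :
    ∀ m, 1 ≤ m → m ≤ M →
      ‖u m‖ ^ 2 + α * ∑ j ∈ Finset.Icc 1 m, τ j * ‖u j‖ ^ 2 ≤
        ‖u 0‖ ^ 2 + (γ ^ 2 / α) * ∑ j ∈ Finset.Icc 1 m, τ j * ‖f j‖ ^ 2 := by
  intro m hm1
  induction m with
  | zero => omega
  | succ n ih =>
    intro hmM
    have hstep := step_12 α γ (τ (n+1)) hα hγ (hτ (n+1) (by omega) hmM) (u n) (u (n+1))
      (f (n+1)) (by simpa using hrec (n+1) (by omega) hmM)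
    rcases Nat.eq_zero_or_pos n with hn | hn
    · subst hn
      simpa [mul_comm] using hstep
    · have ihn := ih (by omega) (by omega)
      rw [Finset.sum_Icc_succ_top (by omega : 1 ≤ n + 1),
        Finset.sum_Icc_succ_top (by omega : 1 ≤ n + 1)]
      nlinarith [ihn, hstep]
end

section
/- Let H be a real Hilbert space, α > 0, T > 0, M ≥ 1, set τ = T/M and t_m = mτ for 0 ≤ m ≤ M. Let u : ℝ → H be twice continuously differentiable on [0, T], set f(t) = u'(t) + α u(t), and define the backward Euler approximations by u⁰ = u(0) and (u^m − u^{m−1})/τ + α u^m = f(t_m) for 1 ≤ m ≤ M. Then max_{0 ≤ m ≤ M} ‖u(t_m) − u^m‖ ≤ (τ / (3α)^{1/2}) (∫₀^T ‖u''(s)‖² ds)^{1/2}. -/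
open MeasureTheory intervalIntegral

open MeasureTheory

-- Cauchy-Schwarz for interval integrals of nonneg continuous functions
lemma cs_interval {a b : ℝ} (hab : a ≤ b) {g h : ℝ → ℝ}
    (hg : ContinuousOn g (Set.Icc a b)) (hh : ContinuousOn h (Set.Icc a b))
    (hg0 : ∀ x ∈ Set.Icc a b, 0 ≤ g x) (hh0 : ∀ x ∈ Set.Icc a b, 0 ≤ h x) :
    ∫ s in a..b, g s * h s ≤
      Real.sqrt (∫ s in a..b, g s ^ 2) * Real.sqrt (∫ s in a..b, h s ^ 2) := by
  set μ := volume.restrict (Set.Ioc a b) with hμ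
  have hfin : IsFiniteMeasure μ := by
    constructor
    rw [hμ, Measure.restrict_apply_univ, Real.volume_Ioc]
    exact ENNReal.ofReal_lt_top
  have memL2 : ∀ {f : ℝ → ℝ}, ContinuousOn f (Set.Icc a b) →
      MemLp f (ENNReal.ofReal 2) μ := by
    intro f hf
    have hmeas : AEStronglyMeasurable f μ :=
      (hf.mono Set.Ioc_subset_Icc_self).aestronglyMeasurable measurableSet_Ioc
    obtain ⟨C, hC⟩ := isCompact_Icc.exists_bound_of_continuousOn hf
    have hb : ∀ᵐ x ∂μ, ‖f x‖ ≤ C := by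
      refine (ae_restrict_iff' measurableSet_Ioc).2 (Filter.Eventually.of_forall fun x hx => ?_)
      exact hC x (Set.Ioc_subset_Icc_self hx)
    exact (memLp_top_of_bound hmeas C hb).mono_exponent le_top
  have hpq : (2:ℝ).HolderConjugate 2 := Real.HolderConjugate.two_two
  have key := integral_mul_le_Lp_mul_Lq_of_nonneg hpq
    (f := g) (g := h) (μ := μ)
    ((ae_restrict_iff' measurableSet_Ioc).2 (Filter.Eventually.of_forall fun x hx =>
      hg0 x (Set.Ioc_subset_Icc_self hx)))
    ((ae_restrict_iff' measurableSet_Ioc).2 (Filter.Eventually.of_forall fun x hx =>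
      hh0 x (Set.Ioc_subset_Icc_self hx)))
    (memL2 hg) (memL2 hh)
  rw [intervalIntegral.integral_of_le hab, intervalIntegral.integral_of_le hab,
    intervalIntegral.integral_of_le hab]
  refine key.trans (le_of_eq ?_)
  congr 1
  · rw [Real.sqrt_eq_rpow]
    congr 1
    refine integral_congr_ae ((ae_restrict_iff' measurableSet_Ioc).2
      (Filter.Eventually.of_forall fun x hx => ?_))
    show g x ^ (2:ℝ) = g x ^ (2:ℕ)
    rw [← Real.rpow_natCast (g x) 2]; norm_num
  · rw [Real.sqrt_eq_rpow]
    congr 1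
    refine integral_congr_ae ((ae_restrict_iff' measurableSet_Ioc).2
      (Filter.Eventually.of_forall fun x hx => ?_))
    show h x ^ (2:ℝ) = h x ^ (2:ℕ)
    rw [← Real.rpow_natCast (h x) 2]; norm_num
lemma sq_ineq {x y c r : ℝ} (hx : 0 ≤ x) (hy : 0 ≤ y) (hc : 0 ≤ c) (hr : 0 ≤ r)
    (h : r ^ 2 = x ^ 2 + y ^ 2) : x + c * y ≤ (1 + c ^ 2) * r := by
  have h1 : (x + c * y) ^ 2 ≤ ((1 + c ^ 2) * r) ^ 2 := by
    nlinarith [sq_nonneg (y - c * x), sq_nonneg (c * r), sq_nonneg r, sq_nonneg (c^2 * r)]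
  have h2 : 0 ≤ (1 + c ^ 2) * r := by positivity
  exact (pow_le_pow_iff_left₀ (by positivity) h2 two_ne_zero).mp h1

-- Taylor with integral remainder
open intervalIntegral in
lemma taylor_step {H : Type*} [NormedAddCommGroup H] [NormedSpace ℝ H] [CompleteSpace H]
    {u u' u'' : ℝ → H} {a b T : ℝ} (ha : 0 ≤ a) (hab : a ≤ b) (hbT : b ≤ T)
    (hd1 : ∀ t ∈ Set.Icc (0 : ℝ) T, HasDerivAt u (u' t) t)
    (hd2 : ∀ t ∈ Set.Icc (0 : ℝ) T, HasDerivAt u' (u'' t) t)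
    (hc : ContinuousOn u'' (Set.Icc (0 : ℝ) T)) :
    u b - u a - (b - a) • u' b = ∫ s in a..b, (a - s) • u'' s := by
  have hsub : Set.Icc a b ⊆ Set.Icc (0:ℝ) T := Set.Icc_subset_Icc ha hbT
  have hderiv : ∀ s ∈ Set.uIcc a b,
      HasDerivAt (fun t => u t + (a - t) • u' t) ((a - s) • u'' s) s := by
    intro s hs
    rw [Set.uIcc_of_le hab] at hs
    have hs' := hsub hs
    have h1 := (hd1 s hs')
    have h2 : HasDerivAt (fun t => (a - t) • u' t)
        ((a - s) • u'' s + (-1 : ℝ) • u' s) s := by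
      have hlin : HasDerivAt (fun t : ℝ => a - t) (-1) s := by
        exact (hasDerivAt_id' s).const_sub a
      exact hlin.smul (hd2 s hs')
    have := h1.add h2
    convert this using 1
    · rfl
    · rw [neg_one_smul]; abel
  have hint : IntervalIntegrable (fun s => (a - s) • u'' s) MeasureTheory.volume a b := by
    apply ContinuousOn.intervalIntegrable
    rw [Set.uIcc_of_le hab]
    exact (continuousOn_const.sub continuousOn_id).smul (hc.mono hsub)
  have := integral_eq_sub_of_hasDerivAt hderiv hint
  rw [this]
  have : a - a = 0 := by ring
  rw [this, zero_smul, add_zero]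
  have hba : a - b = -(b - a) := by ring
  rw [hba, neg_smul]
  abel

theorem stmt_13 {H : Type*} [NormedAddCommGroup H] [InnerProductSpace ℝ H]
    [CompleteSpace H]
    (α T : ℝ) (hα : 0 < α) (hT : 0 < T)
    (M : ℕ) (hM : 1 ≤ M)
    (τ : ℝ) (hτ : τ = T / M)
    (u u' u'' : ℝ → H)
    (hd1 : ∀ t ∈ Set.Icc (0 : ℝ) T, HasDerivAt u (u' t) t)
    (hd2 : ∀ t ∈ Set.Icc (0 : ℝ) T, HasDerivAt u' (u'' t) t)
    (hc : ContinuousOn u'' (Set.Icc (0 : ℝ) T))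
    (f : ℝ → H) (hf : ∀ t, f t = u' t + α • u t)
    (v : ℕ → H) (hv0 : v 0 = u 0)
    (hrec : ∀ m : ℕ, 1 ≤ m → m ≤ M →
      τ⁻¹ • (v m - v (m - 1)) + α • v m = f (m * τ)) :
    ∀ m : ℕ, m ≤ M →
      ‖u (m * τ) - v m‖ ≤
        (τ / Real.sqrt (3 * α)) * Real.sqrt (∫ s in (0 : ℝ)..T, ‖u'' s‖ ^ 2) := by
  have hMpos : (0:ℝ) < M := by
    have : (1:ℝ) ≤ M := by exact_mod_cast hM
    linarith
  have hτpos : 0 < τ := by rw [hτ]; positivity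
  have hMτ : (M:ℝ) * τ = T := by rw [hτ]; field_simp
  have htm : ∀ m : ℕ, m ≤ M → (m:ℝ) * τ ≤ T := by
    intro m hm
    rw [← hMτ]
    have : (m:ℝ) ≤ M := by exact_mod_cast hm
    nlinarith
  set C := τ / Real.sqrt (3 * α) with hC
  have h3α : (0:ℝ) < 3 * α := by positivity
  have hCpos : 0 < C := by
    rw [hC]; exact div_pos hτpos (Real.sqrt_pos.mpr h3α)
  set φ : ℝ → ℝ := fun s => ‖u'' s‖ ^ 2 with hφ
  have hφc : ContinuousOn φ (Set.Icc (0:ℝ) T) := (hc.norm.pow 2)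
  have hφ0 : ∀ s, 0 ≤ φ s := fun s => by positivity
  have hφint : ∀ a b : ℝ, 0 ≤ a → b ≤ T → a ≤ b → IntervalIntegrable φ volume a b := by
    intro a b ha hb hab
    exact (hφc.mono (Set.Icc_subset_Icc ha hb)).intervalIntegrable_of_Icc hab
  -- main induction
  have key : ∀ m : ℕ, m ≤ M →
      ‖u (m * τ) - v m‖ ≤ C * Real.sqrt (∫ s in (0:ℝ)..((m:ℝ) * τ), φ s) := by
    intro m
    induction m with
    | zero =>
      intro _
      simp only [Nat.cast_zero, zero_mul, hv0, sub_self, norm_zero]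
      positivity
    | succ m ih =>
      intro hm1
      have hmM : m ≤ M := by omega
      have ihm := ih hmM
      set a : ℝ := (m:ℝ) * τ with ha_def
      set b : ℝ := ((m+1 : ℕ):ℝ) * τ with hb_def
      have hba : b - a = τ := by rw [hb_def, ha_def]; push_cast; ring
      have ha0 : 0 ≤ a := by positivity
      have hab : a ≤ b := by nlinarith [hba, hτpos]
      have hbT : b ≤ T := htm (m+1) hm1
      have haT : a ≤ T := le_trans hab hbT
      -- Taylor remainder
      have hTay : u b - u a - τ • u' b = ∫ s in a..b, (a - s) • u'' s := by
        have := taylor_step ha0 hab hbT hd1 hd2 hc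
        rwa [hba] at this
      set z : H := u b - u a - τ • u' b with hz_def
      -- bound on ‖z‖
      set B : ℝ := ∫ s in a..b, φ s with hB_def
      have hB0 : 0 ≤ B := by
        rw [hB_def]
        exact intervalIntegral.integral_nonneg hab (fun s _ => hφ0 s)
      have hznorm : ‖z‖ ≤ Real.sqrt (τ^3/3) * Real.sqrt B := by
        rw [hTay]
        calc ‖∫ s in a..b, (a - s) • u'' s‖
            ≤ ∫ s in a..b, ‖(a - s) • u'' s‖ :=
              intervalIntegral.norm_integral_le_integral_norm hab
          _ = ∫ s in a..b, (s - a) * ‖u'' s‖ := by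
              apply intervalIntegral.integral_congr
              intro s hs
              rw [Set.uIcc_of_le hab] at hs
              show ‖(a - s) • u'' s‖ = (s - a) * ‖u'' s‖
              rw [norm_smul, Real.norm_eq_abs, abs_of_nonpos (by linarith [hs.1])]
              ring
          _ ≤ Real.sqrt (∫ s in a..b, (s - a)^2) * Real.sqrt (∫ s in a..b, ‖u'' s‖^2) := by
              apply cs_interval hab
              · exact (continuousOn_id.sub continuousOn_const)
              · exact (hc.mono (Set.Icc_subset_Icc ha0 hbT)).norm
              · intro x hx; linarith [hx.1]
              · intro x hx; positivity
          _ = Real.sqrt (τ^3/3) * Real.sqrt B := by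
              congr 2
              rw [intervalIntegral.integral_comp_sub_right (fun x => x^2) a]
              simp only [sub_self, integral_pow]
              rw [hba]
              norm_num
      -- the recursion
      have h1ατ : (0:ℝ) < 1 + α * τ := by positivity
      have hR := hrec (m+1) (by omega) hm1
      rw [Nat.add_sub_cancel, hf] at hR
      have hR' : (v (m+1) - v m) + (α * τ) • v (m+1) = τ • u' b + (α * τ) • u b := by
        have := congrArg (fun x : H => τ • x) hR
        simp only [smul_add, smul_smul, mul_inv_cancel₀ hτpos.ne'] at this
        rw [one_smul] at this
        calc (v (m+1) - v m) + (α * τ) • v (m+1)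
            = τ • (τ⁻¹ • (v (m+1) - v m)) + τ • (α • v (m+1)) := by
              rw [smul_smul, mul_inv_cancel₀ hτpos.ne', one_smul, smul_smul, mul_comm τ α]
          _ = τ • u' b + (α * τ) • u b := by
              rw [← smul_add, hR, smul_add, smul_smul, mul_comm τ α]
      have h1 : (1 + α * τ) • (u b - v (m+1)) = (u a - v m) + z := by
        rw [hz_def]
        have expand : (1 + α * τ) • (u b - v (m+1)) =
            u b + (α * τ) • u b - v (m+1) - (α * τ) • v (m+1) := by
          rw [add_smul, one_smul, smul_sub]; abel
        rw [expand]
        have hv' : v (m+1) + (α * τ) • v (m+1) = v m + τ • u' b + (α * τ) • u b := by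
          have := hR'
          abel_nf at this ⊢
          linear_combination (norm := abel) this
        calc u b + (α * τ) • u b - v (m+1) - (α * τ) • v (m+1)
            = u b + (α * τ) • u b - (v (m+1) + (α * τ) • v (m+1)) := by abel
          _ = u b + (α * τ) • u b - (v m + τ • u' b + (α * τ) • u b) := by rw [hv']
          _ = (u a - v m) + (u b - u a - τ • u' b) := by abel
      have h2 : u b - v (m+1) = (1 + α * τ)⁻¹ • ((u a - v m) + z) := by
        rw [← h1, smul_smul, inv_mul_cancel₀ h1ατ.ne', one_smul]
      -- put everything together
      set A : ℝ := ∫ s in (0:ℝ)..a, φ s with hA_def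
      have hA0 : 0 ≤ A := by
        rw [hA_def]
        exact intervalIntegral.integral_nonneg ha0 (fun s _ => hφ0 s)
      have hAB : A + B = ∫ s in (0:ℝ)..b, φ s := by
        rw [hA_def, hB_def]
        exact intervalIntegral.integral_add_adjacent_intervals
          (hφint 0 a le_rfl haT ha0) (hφint a b ha0 hbT hab)
      set c : ℝ := Real.sqrt (α * τ) with hc_def
      have hc0 : 0 ≤ c := Real.sqrt_nonneg _
      have hc2 : c ^ 2 = α * τ := Real.sq_sqrt (by positivity)
      have hCc : Real.sqrt (τ^3/3) = C * c := by
        rw [show τ^3/3 = (C*c)^2 by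
          rw [mul_pow, hc2, hC, div_pow, Real.sq_sqrt h3α.le]
          field_simp]
        exact Real.sqrt_sq (by positivity)
      have hmain : Real.sqrt A + c * Real.sqrt B ≤ (1 + c^2) * Real.sqrt (A + B) :=
        sq_ineq (Real.sqrt_nonneg A) (Real.sqrt_nonneg B) hc0 (Real.sqrt_nonneg _)
          (by rw [Real.sq_sqrt (by linarith), Real.sq_sqrt hA0, Real.sq_sqrt hB0])
      have hq : (0:ℝ) < (1 + α * τ)⁻¹ := by positivity
      calc ‖u b - v (m+1)‖
          = (1 + α * τ)⁻¹ * ‖(u a - v m) + z‖ := by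
            rw [h2, norm_smul, Real.norm_eq_abs, abs_of_pos hq]
        _ ≤ (1 + α * τ)⁻¹ * (‖u a - v m‖ + ‖z‖) :=
            mul_le_mul_of_nonneg_left (norm_add_le _ _) hq.le
        _ ≤ (1 + α * τ)⁻¹ * (C * Real.sqrt A + Real.sqrt (τ^3/3) * Real.sqrt B) := by
            have : ‖u a - v m‖ ≤ C * Real.sqrt A := ihm
            gcongr
        _ = (1 + α * τ)⁻¹ * C * (Real.sqrt A + c * Real.sqrt B) := by
            rw [hCc]; ring
        _ ≤ (1 + α * τ)⁻¹ * C * ((1 + c^2) * Real.sqrt (A + B)) := by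
            have hpos : 0 ≤ (1 + α * τ)⁻¹ * C := by positivity
            exact mul_le_mul_of_nonneg_left hmain hpos
        _ = C * Real.sqrt (A + B) := by
            rw [hc2]
            field_simp
        _ = C * Real.sqrt (∫ s in (0:ℝ)..b, φ s) := by rw [hAB]
  -- conclude
  intro m hm
  refine (key m hm).trans ?_
  apply mul_le_mul_of_nonneg_left _ hCpos.le
  apply Real.sqrt_le_sqrt
  apply intervalIntegral.integral_mono_interval le_rfl (by positivity : (0:ℝ) ≤ (m:ℝ)*τ) (htm m hm)
  · exact Filter.Eventually.of_forall (fun s => hφ0 s)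
  · exact hφint 0 T le_rfl le_rfl hT.le
end

section
/- Let V and H be real Hilbert spaces and ι : V → H a continuous linear map. Let β > 0, let a : V × V → ℝ be a bilinear form with a(v, v) ≥ β ‖v‖_V² for all v ∈ V, let M ≥ 1, τ₁, …, τ_M > 0, C₁, …, C_M ≥ 0, and let w⁰, w¹, …, w^M ∈ V satisfy, for each 1 ≤ m ≤ M, ⟨(ι w^m − ι w^{m−1})/τ_m, ι w^m⟩_H + a(w^m, w^m) ≤ C_m ‖w^m‖_V. Then for every m with 1 ≤ m ≤ M, ‖ι w^m‖_H² + β Σ_{j=1}^{m} τ_j ‖w^j‖_V² ≤ ‖ι w⁰‖_H² + (1/β) Σ_{j=1}^{m} τ_j C_j². -/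
open scoped RealInnerProductSpace

theorem stmt_14 {V H : Type*}
    [NormedAddCommGroup V] [InnerProductSpace ℝ V]
    [NormedAddCommGroup H] [InnerProductSpace ℝ H]
    (ι : V →L[ℝ] H)
    (β : ℝ) (hβ : 0 < β)
    (a : V →ₗ[ℝ] V →ₗ[ℝ] ℝ)
    (hcoer : ∀ v : V, a v v ≥ β * ‖v‖ ^ 2)
    (M : ℕ) (hM : 1 ≤ M)
    (τ : ℕ → ℝ) (hτ : ∀ m, 1 ≤ m → m ≤ M → 0 < τ m)
    (C : ℕ → ℝ) (hC : ∀ m, 1 ≤ m → m ≤ M → 0 ≤ C m)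
    (w : ℕ → V)
    (hineq : ∀ m, 1 ≤ m → m ≤ M →
      ⟪(τ m)⁻¹ • (ι (w m) - ι (w (m - 1))), ι (w m)⟫ + a (w m) (w m) ≤
        C m * ‖w m‖) :
    ∀ m, 1 ≤ m → m ≤ M →
      ‖ι (w m)‖ ^ 2 + β * ∑ j ∈ Finset.Icc 1 m, τ j * ‖w j‖ ^ 2 ≤
        ‖ι (w 0)‖ ^ 2 + (1 / β) * ∑ j ∈ Finset.Icc 1 m, τ j * C j ^ 2 := by
  have step : ∀ m, 1 ≤ m → m ≤ M →
      ‖ι (w m)‖ ^ 2 + β * (τ m * ‖w m‖ ^ 2) ≤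
        ‖ι (w (m - 1))‖ ^ 2 + (1 / β) * (τ m * C m ^ 2) := by
    intro m h1 h2
    have hτm := hτ m h1 h2
    have h := hineq m h1 h2
    rw [real_inner_smul_left] at h
    set I : ℝ := ⟪ι (w m) - ι (w (m - 1)), ι (w m)⟫ with hI
    have hinner : (‖ι (w m)‖ ^ 2 - ‖ι (w (m - 1))‖ ^ 2) / 2 ≤ I := by
      have e1 : I = ‖ι (w m)‖ ^ 2 - ⟪ι (w (m - 1)), ι (w m)⟫ := by
        rw [hI, inner_sub_left, real_inner_self_eq_norm_sq]
      have e2 : ⟪ι (w (m - 1)), ι (w m)⟫ ≤ ‖ι (w (m - 1))‖ * ‖ι (w m)‖ :=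
        real_inner_le_norm _ _
      nlinarith [sq_nonneg (‖ι (w (m - 1))‖ - ‖ι (w m)‖)]
    have hco := hcoer (w m)
    have h' : I + τ m * a (w m) (w m) ≤ τ m * (C m * ‖w m‖) := by
      have := mul_le_mul_of_nonneg_left h hτm.le
      rw [mul_add, ← mul_assoc, mul_inv_cancel₀ hτm.ne', one_mul] at this
      exact this
    have hy : 2 * β * (C m * ‖w m‖) ≤ C m ^ 2 + β ^ 2 * ‖w m‖ ^ 2 := by
      nlinarith [sq_nonneg (C m - β * ‖w m‖)]
    rw [← mul_le_mul_iff_right₀ hβ]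
    have h1β : β * ((1 / β) * (τ m * C m ^ 2)) = τ m * C m ^ 2 := by
      field_simp
    nlinarith [mul_le_mul_of_nonneg_left hy hτm.le,
      mul_le_mul_of_nonneg_left hco hτm.le]
  intro m h1
  induction m, h1 using Nat.le_induction with
  | base =>
    intro h2
    have := step 1 le_rfl h2
    simpa using this
  | succ n hn ih =>
    intro h2
    have hnM : n ≤ M := le_of_lt (lt_of_lt_of_le (Nat.lt_succ_self n) h2)
    have ihn := ih hnM
    have hst := step (n + 1) (Nat.le_add_left 1 n) h2
    simp only [Nat.add_sub_cancel] at hst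
    rw [Finset.sum_Icc_succ_top (by omega : 1 ≤ n + 1),
        Finset.sum_Icc_succ_top (by omega : 1 ≤ n + 1)]
    have hβnn : (0:ℝ) ≤ β := hβ.le
    nlinarith [ihn, hst]
end

section
/- Let V and H be real Hilbert spaces and ι : V → H a continuous linear map. Let β > 0, T > 0, let a : V × V → ℝ be a bilinear form with a(v, v) ≥ β ‖v‖_V² for all v ∈ V, let C : [0, T] → ℝ be continuous and nonnegative, and let w : [0, T] → V be such that t ↦ ι w(t) is differentiable in H and for every t ∈ [0, T], ⟨(d/dt)(ι w)(t), ι w(t)⟩_H + a(w(t), w(t)) ≤ C(t) ‖w(t)‖_V, with t ↦ ‖w(t)‖_V continuous. Then for every t ∈ [0, T], ‖ι w(t)‖_H² + β ∫₀ᵗ ‖w(s)‖_V² ds ≤ ‖ι w(0)‖_H² + (1/β) ∫₀ᵗ C(s)² ds. -/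
open scoped RealInnerProductSpace

theorem stmt_15 {V H : Type*}
    [NormedAddCommGroup V] [InnerProductSpace ℝ V]
    [NormedAddCommGroup H] [InnerProductSpace ℝ H]
    (ι : V →L[ℝ] H)
    (β T : ℝ) (hβ : 0 < β) (hT : 0 < T)
    (a : V →ₗ[ℝ] V →ₗ[ℝ] ℝ)
    (hcoer : ∀ v : V, a v v ≥ β * ‖v‖ ^ 2)
    (C : ℝ → ℝ) (hCcont : ContinuousOn C (Set.Icc 0 T))
    (hCnonneg : ∀ t ∈ Set.Icc (0 : ℝ) T, 0 ≤ C t)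
    (w : ℝ → V) (dw : ℝ → H)
    (hderiv : ∀ t ∈ Set.Icc (0 : ℝ) T, HasDerivAt (fun s => ι (w s)) (dw t) t)
    (hineq : ∀ t ∈ Set.Icc (0 : ℝ) T,
      ⟪dw t, ι (w t)⟫ + a (w t) (w t) ≤ C t * ‖w t‖)
    (hwcont : ContinuousOn (fun t => ‖w t‖) (Set.Icc 0 T)) :
    ∀ t ∈ Set.Icc (0 : ℝ) T,
      ‖ι (w t)‖ ^ 2 + β * ∫ s in (0 : ℝ)..t, ‖w s‖ ^ 2 ≤
        ‖ι (w 0)‖ ^ 2 + (1 / β) * ∫ s in (0 : ℝ)..t, C s ^ 2 := by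
  have hwsq : ContinuousOn (fun s => ‖w s‖ ^ 2) (Set.Icc 0 T) := hwcont.pow 2
  have hCsq : ContinuousOn (fun s => C s ^ 2) (Set.Icc 0 T) := hCcont.pow 2
  set F : ℝ → ℝ := fun t => ‖ι (w t)‖ ^ 2 + β * (∫ s in (0:ℝ)..t, ‖w s‖ ^ 2)
      - (1/β) * ∫ s in (0:ℝ)..t, C s ^ 2 with hF
  -- continuity of F on Icc 0 T
  have hnormcont : ContinuousOn (fun t => ‖ι (w t)‖ ^ 2) (Set.Icc 0 T) := fun t ht =>
    ((((hderiv t ht).continuousAt).norm).pow 2).continuousWithinAt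
  have hint1 : ContinuousOn (fun t => ∫ s in (0:ℝ)..t, ‖w s‖ ^ 2) (Set.Icc 0 T) := by
    have := intervalIntegral.continuousOn_primitive_interval
      (a := 0) (b := T) (μ := MeasureTheory.volume) (f := fun s => ‖w s‖ ^ 2) ?_
    · rwa [Set.uIcc_of_le hT.le] at this
    · rw [Set.uIcc_of_le hT.le]; exact hwsq.integrableOn_Icc
  have hint2 : ContinuousOn (fun t => ∫ s in (0:ℝ)..t, C s ^ 2) (Set.Icc 0 T) := by
    have := intervalIntegral.continuousOn_primitive_interval
      (a := 0) (b := T) (μ := MeasureTheory.volume) (f := fun s => C s ^ 2) ?_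
    · rwa [Set.uIcc_of_le hT.le] at this
    · rw [Set.uIcc_of_le hT.le]; exact hCsq.integrableOn_Icc
  have hFcont : ContinuousOn F (Set.Icc 0 T) := by
    rw [hF]
    exact (hnormcont.add ((continuousOn_const (c := β)).mul hint1)).sub
      ((continuousOn_const (c := 1/β)).mul hint2)
  -- derivative of F on the interior
  have hFanti : AntitoneOn F (Set.Icc 0 T) := by
    apply antitoneOn_of_hasDerivWithinAt_nonpos (f' := fun t =>
        (⟪ι (w t), dw t⟫ + ⟪dw t, ι (w t)⟫) + β * ‖w t‖ ^ 2 - (1/β) * C t ^ 2)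
        (convex_Icc 0 T) hFcont
    · intro t ht
      rw [interior_Icc] at ht
      have htIcc : t ∈ Set.Icc (0:ℝ) T := Set.mem_Icc_of_Ioo ht
      have hmem : Set.Icc (0:ℝ) T ∈ nhds t := Icc_mem_nhds ht.1 ht.2
      -- derivative of the norm-square part
      have h1 : HasDerivAt (fun s => ‖ι (w s)‖ ^ 2)
          (⟪ι (w t), dw t⟫ + ⟪dw t, ι (w t)⟫) t := by
        have := (hderiv t htIcc).inner ℝ (hderiv t htIcc)
        refine this.congr_of_eventuallyEq ?_
        filter_upwards with s
        rw [real_inner_self_eq_norm_sq]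
      -- derivative of the first integral
      have hii1 : IntervalIntegrable (fun s => ‖w s‖ ^ 2) MeasureTheory.volume 0 t := by
        apply ContinuousOn.intervalIntegrable
        apply hwsq.mono
        rw [Set.uIcc_of_le ht.1.le]
        exact Set.Icc_subset_Icc le_rfl ht.2.le
      have hii2 : IntervalIntegrable (fun s => C s ^ 2) MeasureTheory.volume 0 t := by
        apply ContinuousOn.intervalIntegrable
        apply hCsq.mono
        rw [Set.uIcc_of_le ht.1.le]
        exact Set.Icc_subset_Icc le_rfl ht.2.le
      have hm1 : StronglyMeasurableAtFilter (fun s => ‖w s‖ ^ 2) (nhds t)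
          MeasureTheory.volume :=
        ⟨Set.Icc 0 T, hmem, hwsq.aestronglyMeasurable measurableSet_Icc⟩
      have hm2 : StronglyMeasurableAtFilter (fun s => C s ^ 2) (nhds t)
          MeasureTheory.volume :=
        ⟨Set.Icc 0 T, hmem, hCsq.aestronglyMeasurable measurableSet_Icc⟩
      have h2 : HasDerivAt (fun u => ∫ s in (0:ℝ)..u, ‖w s‖ ^ 2) (‖w t‖ ^ 2) t :=
        intervalIntegral.integral_hasDerivAt_right hii1 hm1 (hwsq.continuousAt hmem)
      have h3 : HasDerivAt (fun u => ∫ s in (0:ℝ)..u, C s ^ 2) (C t ^ 2) t :=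
        intervalIntegral.integral_hasDerivAt_right hii2 hm2 (hCsq.continuousAt hmem)
      exact HasDerivAt.hasDerivWithinAt (s := interior (Set.Icc 0 T))
        ((h1.add (h2.const_mul β)).sub (h3.const_mul (1/β)))
    · intro t ht
      rw [interior_Icc] at ht
      have htIcc : t ∈ Set.Icc (0:ℝ) T := Set.mem_Icc_of_Ioo ht
      have h5 := hineq t htIcc
      have h6 := hcoer (w t)
      have h10 : ⟪dw t, ι (w t)⟫ ≤ C t * ‖w t‖ - β * ‖w t‖ ^ 2 := by linarith
      have h8 : ⟪ι (w t), dw t⟫ = ⟪dw t, ι (w t)⟫ := real_inner_comm _ _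
      rw [h8, sub_nonpos, div_mul_eq_mul_div, one_mul, le_div_iff₀ hβ]
      nlinarith [mul_le_mul_of_nonneg_right h10 hβ.le, sq_nonneg (C t - β * ‖w t‖)]
  -- conclude
  intro t ht
  have h0 : (0:ℝ) ∈ Set.Icc (0:ℝ) T := Set.left_mem_Icc.2 hT.le
  have := hFanti h0 ht ht.1
  simp only [hF, intervalIntegral.integral_same, mul_zero, sub_zero, add_zero] at this
  linarith
end
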